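/- arXiv:1908.06270 — 4 statements merged into one kernel-verified Lean document; each statement's English description precedes it below -/
import Mathlib

section
/- Let $f(a,b) := 4 + \frac{1}{2}\big(ab - 2a - 2b - \sqrt{ab(4-a)(4-b)}\big)$. A triple $(a,b,c) \in \mathbb{R}_{\geq 0}^3$ is representable if and only if $a + b \leq 4$ and $c \leq f(a,b)$. -/
def Representable (a b c : ℝ) : Prop :=
  ∃ a1 a2 b1 b3 c2 c3 : ℝ,
    a1 ∈ Set.Icc (0:ℝ) 2 ∧ a2 ∈ Set.Icc (0:ℝ) 2 ∧ b1 ∈ Set.Icc (0:ℝ) 2 ∧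
    b3 ∈ Set.Icc (0:ℝ) 2 ∧ c2 ∈ Set.Icc (0:ℝ) 2 ∧ c3 ∈ Set.Icc (0:ℝ) 2 ∧
    a1 * a2 = a ∧ b1 * b3 = b ∧ c2 * c3 = c ∧
    a1 + b1 ≤ 2 ∧ a2 + c2 ≤ 2 ∧ b3 + c3 ≤ 2


noncomputable def f (a b : ℝ) : ℝ :=
  4 + 1 / 2 * (a * b - 2 * a - 2 * b - Real.sqrt (a * b * (4 - a) * (4 - b)))

lemma amgm' (x y : ℝ) (hx : 0 ≤ x) (hy : 0 ≤ y) : 2 * Real.sqrt (x * y) ≤ x + y := by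
  rw [Real.sqrt_mul hx]
  nlinarith [sq_nonneg (Real.sqrt x - Real.sqrt y), Real.sq_sqrt hx, Real.sq_sqrt hy,
    Real.sqrt_nonneg x, Real.sqrt_nonneg y]

lemma mySqLe (g t K : ℝ) (hg0 : 0 ≤ g) (h : g ≤ t) (hg2 : g ^ 2 = K) : K ≤ t ^ 2 := by
  nlinarith

lemma key_quad (a b c w : ℝ) (hapos : 0 < a) (hbpos : 0 < b)
    (hab : a + b ≤ 4) (hcw : c ≤ w) (hwup : 4 * w ≤ (4 - a) * (4 - b))
    (h4 : (4 - a) * (4 - b) * w ≤ (w - (a + b - 4)) ^ 2) :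
    c ≤ 4 + 1 / 2 * (a * b - 2 * a - 2 * b - Real.sqrt (a * b * (4 - a) * (4 - b))) := by
  have ha4 : a ≤ 4 := by linarith
  have hb4 : b ≤ 4 := by linarith
  have hdnn : 0 ≤ a * b * (4 - a) * (4 - b) :=
    mul_nonneg (mul_nonneg (mul_nonneg hapos.le hbpos.le) (by linarith)) (by linarith)
  set d : ℝ := Real.sqrt (a * b * (4 - a) * (4 - b)) with hdd
  have hd0 : 0 ≤ d := Real.sqrt_nonneg _
  have hd2 : d ^ 2 = a * b * (4 - a) * (4 - b) := Real.sq_sqrt hdnn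
  have h5 : a * b / 2 ≤ (a * b - 2 * a - 2 * b + 8) - 2 * w := by nlinarith [hwup]
  have h8 : 0 < (a * b - 2 * a - 2 * b + 8) - 2 * w + d := by
    nlinarith [h5, hd0, mul_pos hapos hbpos]
  have h6 : 0 ≤ ((a * b - 2 * a - 2 * b + 8) - 2 * w - d) *
      ((a * b - 2 * a - 2 * b + 8) - 2 * w + d) := by nlinarith [h4, hd2]
  have h7 : d ≤ (a * b - 2 * a - 2 * b + 8) - 2 * w := by nlinarith [h6, h8]
  linarith

set_option maxHeartbeats 1000000 in
lemma fwd (a b c : ℝ) (ha : 0 ≤ a) (hb : 0 ≤ b) (hc : 0 ≤ c)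
    (h : Representable a b c) : a + b ≤ 4 ∧ c ≤ f a b := by
  obtain ⟨a1, a2, b1, b3, c2, c3, ⟨ha10, ha12⟩, ⟨ha20, ha22⟩, ⟨hb10, hb12⟩,
    ⟨hb30, hb32⟩, ⟨hc20, hc22⟩, ⟨hc30, hc32⟩, hA, hB, hC, h1, h2, h3⟩ := h
  have haa : a ≤ 2 * a2 := by nlinarith [mul_nonneg (show (0:ℝ) ≤ 2 - a1 by linarith) ha20]
  have hbb : b ≤ 2 * b3 := by nlinarith [mul_nonneg (show (0:ℝ) ≤ 2 - b1 by linarith) hb30]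
  have ha4 : a ≤ 4 := by linarith
  have hb4 : b ≤ 4 := by linarith
  have hab : a + b ≤ 4 := by
    nlinarith [mul_nonneg ha10 (show (0:ℝ) ≤ 2 - a2 by linarith),
      mul_nonneg hb10 (show (0:ℝ) ≤ 2 - b3 by linarith)]
  refine ⟨hab, ?_⟩
  have hca2 : c2 ≤ 2 - a2 := by linarith
  have hcb3 : c3 ≤ 2 - b3 := by linarith
  rw [f]
  rcases eq_or_lt_of_le ha with h0 | hapos
  · -- a = 0
    have ha0 : a = 0 := h0.symm
    subst ha0
    have hd : Real.sqrt (0 * b * (4 - 0) * (4 - b)) = 0 := by norm_num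
    rw [hd]
    have h9 : c2 * c3 ≤ 2 * (2 - b3) := mul_le_mul hc22 hcb3 hc30 (by norm_num)
    rw [← hC]
    linarith
  rcases eq_or_lt_of_le hb with h0 | hbpos
  · -- b = 0
    have hb0 : b = 0 := h0.symm
    subst hb0
    have hd : Real.sqrt (a * 0 * (4 - a) * (4 - 0)) = 0 := by norm_num
    rw [hd]
    have h9 : c2 * c3 ≤ (2 - a2) * 2 := mul_le_mul hca2 hc32 hc30 (by linarith)
    rw [← hC]
    linarith
  · -- a, b > 0
    have hcw : c ≤ (2 - a2) * (2 - b3) := by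
      rw [← hC]
      exact mul_le_mul hca2 hcb3 hc30 (by linarith)
    have hwup : 4 * ((2 - a2) * (2 - b3)) ≤ (4 - a) * (4 - b) := by
      nlinarith [mul_le_mul (show 4 - 2 * a2 ≤ 4 - a by linarith)
        (show 4 - 2 * b3 ≤ 4 - b by linarith) (show (0:ℝ) ≤ 4 - 2 * b3 by linarith)
        (show (0:ℝ) ≤ 4 - a by linarith)]
    have hK : a * b3 + b * a2 ≤ 2 * (a2 * b3) := by
      have e1 : a * b3 + b * a2 = a2 * b3 * (a1 + b1) := by rw [← hA, ← hB]; ring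
      rw [e1]
      nlinarith [mul_nonneg ha20 hb30]
    have hkey : (4 - b) * (2 - a2) + (4 - a) * (2 - b3) + 2 * (a + b - 4) ≤
        2 * ((2 - a2) * (2 - b3)) := by nlinarith [hK]
    have hx0 : (0:ℝ) ≤ (4 - b) * (2 - a2) := mul_nonneg (by linarith) (by linarith)
    have hy0 : (0:ℝ) ≤ (4 - a) * (2 - b3) := mul_nonneg (by linarith) (by linarith)
    have hamgm := amgm' _ _ hx0 hy0
    have hxy : (4 - b) * (2 - a2) * ((4 - a) * (2 - b3)) =
        (4 - a) * (4 - b) * ((2 - a2) * (2 - b3)) := by ring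
    rw [hxy] at hamgm
    have hg0 : 0 ≤ Real.sqrt ((4 - a) * (4 - b) * ((2 - a2) * (2 - b3))) :=
      Real.sqrt_nonneg _
    have hg2 := Real.sq_sqrt (mul_nonneg (mul_nonneg (show (0:ℝ) ≤ 4 - a by linarith)
      (show (0:ℝ) ≤ 4 - b by linarith)) (mul_nonneg (show (0:ℝ) ≤ 2 - a2 by linarith)
      (show (0:ℝ) ≤ 2 - b3 by linarith)))
    have h3' : Real.sqrt ((4 - a) * (4 - b) * ((2 - a2) * (2 - b3))) ≤
        (2 - a2) * (2 - b3) - (a + b - 4) := by linarith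
    have h4 : (4 - a) * (4 - b) * ((2 - a2) * (2 - b3)) ≤
        ((2 - a2) * (2 - b3) - (a + b - 4)) ^ 2 := mySqLe _ _ _ hg0 h3' hg2
    exact key_quad a b c ((2 - a2) * (2 - b3)) hapos hbpos hab hcw hwup h4

set_option maxHeartbeats 2000000 in
lemma bwd_main (a b c d : ℝ) (hapos : 0 < a) (hbpos : 0 < b) (hab : a + b ≤ 4)
    (hc : 0 ≤ c) (hd0 : 0 ≤ d) (hd2 : d ^ 2 = a * b * (4 - a) * (4 - b))
    (hcf : 2 * c + d ≤ a * b - 2 * a - 2 * b + 8) : Representable a b c := by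
  have h4a : 0 < 4 - a := by linarith
  have h4b : 0 < 4 - b := by linarith
  have hdm : d ≤ (4 - a) * (4 - b) := by
    have h1 : 0 ≤ ((4 - a) * (4 - b) - d) * ((4 - a) * (4 - b) + d) := by
      nlinarith [hd2, mul_nonneg (mul_nonneg h4a.le h4b.le)
        (show (0:ℝ) ≤ 16 - 4 * a - 4 * b by linarith)]
    have h2 : 0 < (4 - a) * (4 - b) + d := by nlinarith [mul_pos h4a h4b, hd0]
    nlinarith [h1, h2]
  have hA : 0 < a * (4 - b) + d := by nlinarith [mul_pos hapos h4b, hd0]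
  have hB : 0 < b * (4 - a) + d := by nlinarith [mul_pos hbpos h4a, hd0]
  -- common witnesses
  have ha1_0 : 0 ≤ 2 * a * (4 - b) / (a * (4 - b) + d) :=
    div_nonneg (by nlinarith [mul_pos hapos h4b]) hA.le
  have ha1_2 : 2 * a * (4 - b) / (a * (4 - b) + d) ≤ 2 := by
    rw [div_le_iff₀ hA]; linarith [hd0]
  have ha2_0 : 0 ≤ (a * (4 - b) + d) / (2 * (4 - b)) := div_nonneg hA.le (by linarith)
  have ha2_2 : (a * (4 - b) + d) / (2 * (4 - b)) ≤ 2 := by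
    rw [div_le_iff₀ (by linarith : (0:ℝ) < 2 * (4 - b))]; nlinarith [hdm]
  have hb1_0 : 0 ≤ 2 * b * (4 - a) / (b * (4 - a) + d) :=
    div_nonneg (by nlinarith [mul_pos hbpos h4a]) hB.le
  have hb1_2 : 2 * b * (4 - a) / (b * (4 - a) + d) ≤ 2 := by
    rw [div_le_iff₀ hB]; linarith [hd0]
  have hb3_0 : 0 ≤ (b * (4 - a) + d) / (2 * (4 - a)) := div_nonneg hB.le (by linarith)
  have hb3_2 : (b * (4 - a) + d) / (2 * (4 - a)) ≤ 2 := by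
    rw [div_le_iff₀ (by linarith : (0:ℝ) < 2 * (4 - a))]; nlinarith [hdm]
  have haa : 2 * a * (4 - b) / (a * (4 - b) + d) * ((a * (4 - b) + d) / (2 * (4 - b))) = a := by
    field_simp
  have hbb : 2 * b * (4 - a) / (b * (4 - a) + d) * ((b * (4 - a) + d) / (2 * (4 - a))) = b := by
    field_simp
  have hab1 : 2 * a * (4 - b) / (a * (4 - b) + d) + 2 * b * (4 - a) / (b * (4 - a) + d) ≤ 2 := by
    rw [div_add_div _ _ hA.ne' hB.ne', div_le_iff₀ (mul_pos hA hB)]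
    nlinarith [hd2]
  rcases eq_or_lt_of_le hdm with hm0 | hm
  · -- degenerate: d = (4-a)(4-b), forces c = 0
    have hc0 : c = 0 := by nlinarith [hcf, hm0]
    refine ⟨_, _, _, _, 0, 0, ⟨ha1_0, ha1_2⟩, ⟨ha2_0, ha2_2⟩, ⟨hb1_0, hb1_2⟩,
      ⟨hb3_0, hb3_2⟩, ⟨le_refl 0, by norm_num⟩, ⟨le_refl 0, by norm_num⟩,
      haa, hbb, by rw [hc0]; ring, hab1, by linarith, by linarith⟩
  · -- main case
    have hm' : 0 < (4 - a) * (4 - b) - d := by linarith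
    have hcF : 4 * c * (4 - a) * (4 - b) ≤ ((4 - a) * (4 - b) - d) ^ 2 := by
      nlinarith [hd2, mul_nonneg (show (0:ℝ) ≤ a * b - 2 * a - 2 * b + 8 - d - 2 * c
        by linarith) (mul_pos h4a h4b).le]
    have hm4b : (4 - a) * (4 - b) - d ≤ 4 * (4 - b) := by nlinarith [hd0]
    have hc3_0 : 0 ≤ ((4 - a) * (4 - b) - d) / (2 * (4 - a)) := div_nonneg hm'.le (by linarith)
    have hc3_2 : ((4 - a) * (4 - b) - d) / (2 * (4 - a)) ≤ 2 := by
      rw [div_le_iff₀ (by linarith : (0:ℝ) < 2 * (4 - a))]; nlinarith [hd0]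
    have hc2_0 : 0 ≤ 2 * c * (4 - a) / ((4 - a) * (4 - b) - d) :=
      div_nonneg (by nlinarith [mul_nonneg hc h4a.le]) hm'.le
    have hc2_2 : 2 * c * (4 - a) / ((4 - a) * (4 - b) - d) ≤ 2 := by
      rw [div_le_iff₀ hm']
      have t : ((4 - a) * (4 - b) - d) * ((4 - a) * (4 - b) - d) ≤
          ((4 - a) * (4 - b) - d) * (4 * (4 - b)) :=
        mul_le_mul_of_nonneg_left hm4b hm'.le
      nlinarith [hcF, t, h4b, hm']
    have hcc : 2 * c * (4 - a) / ((4 - a) * (4 - b) - d) *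
        (((4 - a) * (4 - b) - d) / (2 * (4 - a))) = c := by
      field_simp
    have ha2c2 : (a * (4 - b) + d) / (2 * (4 - b)) +
        2 * c * (4 - a) / ((4 - a) * (4 - b) - d) ≤ 2 := by
      rw [div_add_div _ _ (by linarith : (2:ℝ) * (4 - b) ≠ 0) hm'.ne',
        div_le_iff₀ (mul_pos (by linarith : (0:ℝ) < 2 * (4 - b)) hm')]
      nlinarith [hcF]
    have hb3c3 : (b * (4 - a) + d) / (2 * (4 - a)) +
        ((4 - a) * (4 - b) - d) / (2 * (4 - a)) ≤ 2 := by
      rw [← add_div, div_le_iff₀ (by linarith : (0:ℝ) < 2 * (4 - a))]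
      ring_nf
      nlinarith []
    exact ⟨_, _, _, _, _, _, ⟨ha1_0, ha1_2⟩, ⟨ha2_0, ha2_2⟩, ⟨hb1_0, hb1_2⟩,
      ⟨hb3_0, hb3_2⟩, ⟨hc2_0, hc2_2⟩, ⟨hc3_0, hc3_2⟩, haa, hbb, hcc, hab1, ha2c2, hb3c3⟩

set_option maxHeartbeats 1000000 in
lemma bwd (a b c : ℝ) (ha : 0 ≤ a) (hb : 0 ≤ b) (hc : 0 ≤ c)
    (hab : a + b ≤ 4) (hcf : c ≤ f a b) : Representable a b c := by
  rw [f] at hcf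
  rcases eq_or_lt_of_le ha with h0 | hapos
  · -- a = 0
    have ha0 : a = 0 := h0.symm
    subst ha0
    have hd : Real.sqrt (0 * b * (4 - 0) * (4 - b)) = 0 := by norm_num
    rw [hd] at hcf
    refine ⟨0, 0, 2, b / 2, 2, c / 2, ⟨le_refl 0, by norm_num⟩, ⟨le_refl 0, by norm_num⟩,
      ⟨by norm_num, le_refl 2⟩, ⟨by linarith, by linarith⟩, ⟨by norm_num, le_refl 2⟩,
      ⟨by linarith, by linarith⟩, by ring, by ring, by ring, by norm_num, by norm_num,
      by linarith⟩
  rcases eq_or_lt_of_le hb with h0 | hbpos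
  · -- b = 0
    have hb0 : b = 0 := h0.symm
    subst hb0
    have hd : Real.sqrt (a * 0 * (4 - a) * (4 - 0)) = 0 := by norm_num
    rw [hd] at hcf
    refine ⟨2, a / 2, 0, 0, c / 2, 2, ⟨by norm_num, le_refl 2⟩, ⟨by linarith, by linarith⟩,
      ⟨le_refl 0, by norm_num⟩, ⟨le_refl 0, by norm_num⟩, ⟨by linarith, by linarith⟩,
      ⟨by norm_num, le_refl 2⟩, by ring, by ring, by ring, by norm_num, by linarith,
      by norm_num⟩
  · -- a, b > 0
    have hdnn : 0 ≤ a * b * (4 - a) * (4 - b) :=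
      mul_nonneg (mul_nonneg (mul_nonneg hapos.le hbpos.le) (by linarith)) (by linarith)
    exact bwd_main a b c (Real.sqrt (a * b * (4 - a) * (4 - b))) hapos hbpos hab hc
      (Real.sqrt_nonneg _) (Real.sq_sqrt hdnn) (by linarith)

theorem stmt_7 (a b c : ℝ) (ha : 0 ≤ a) (hb : 0 ≤ b) (hc : 0 ≤ c) :
    Representable a b c ↔ a + b ≤ 4 ∧ c ≤ f a b := by
  constructor
  · exact fwd a b c ha hb hc
  · exact fun ⟨h1, h2⟩ => bwd a b c ha hb hc h1 h2
end

section
/- The set $S_{\mathrm{rep}}$ of representable triples is incurved: there exist no $q \in [0,1]$ and $s, s' \in \mathbb{R}_{\geq 0}^3 \setminus S_{\mathrm{rep}}$ such that $q s + (1-q) s' \in S_{\mathrm{rep}}$. -/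
def Nonneg3 (s : ℝ × ℝ × ℝ) : Prop := 0 ≤ s.1 ∧ 0 ≤ s.2.1 ∧ 0 ≤ s.2.2

def SRep : Set (ℝ × ℝ × ℝ) := {s | Representable s.1 s.2.1 s.2.2}


noncomputable def fR (a b : ℝ) : ℝ :=
  4 + (a*b - 2*a - 2*b - Real.sqrt (a*b*(4-a)*(4-b)))/2

lemma sqrt_regroup {x y : ℝ} (hx : 0 ≤ x) (hy : 0 ≤ y) :
    Real.sqrt x * Real.sqrt y = Real.sqrt (x*y) := (Real.sqrt_mul hx y).symm

lemma f_eq_sq {a b : ℝ} (ha : 0 ≤ a) (ha4 : a ≤ 4) (hb : 0 ≤ b) (hb4 : b ≤ 4) :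
    4 * fR a b = (Real.sqrt (4-a) * Real.sqrt (4-b) - Real.sqrt a * Real.sqrt b)^2 := by
  have h1 : Real.sqrt (4-a) * Real.sqrt (4-b) * (Real.sqrt a * Real.sqrt b)
      = Real.sqrt (a*b*(4-a)*(4-b)) := by
    rw [sqrt_regroup (by linarith) (by linarith), sqrt_regroup ha hb,
      sqrt_regroup (mul_nonneg (by linarith) (by linarith)) (mul_nonneg ha hb)]
    ring_nf
  have h2 : Real.sqrt (4-a) ^ 2 = 4 - a := Real.sq_sqrt (by linarith)
  have h3 : Real.sqrt (4-b) ^ 2 = 4 - b := Real.sq_sqrt (by linarith)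
  have h4 : Real.sqrt a ^ 2 = a := Real.sq_sqrt ha
  have h5 : Real.sqrt b ^ 2 = b := Real.sq_sqrt hb
  unfold fR
  nlinarith [h1, h2, h3, h4, h5]

lemma f_nonneg {a b : ℝ} (ha : 0 ≤ a) (ha4 : a ≤ 4) (hb : 0 ≤ b) (hb4 : b ≤ 4) :
    0 ≤ fR a b := by
  nlinarith [f_eq_sq ha ha4 hb hb4, sq_nonneg (Real.sqrt (4-a) * Real.sqrt (4-b) - Real.sqrt a * Real.sqrt b)]

lemma f_boundary {x y : ℝ} (hx : 0 ≤ x) (hy : 0 ≤ y) (hxy : x + y = 4) :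
    fR x y = 0 := by
  have h4x : 4 - x = y := by linarith
  have h4y : 4 - y = x := by linarith
  have : Real.sqrt (x*y*(4-x)*(4-y)) = x*y := by
    rw [h4x, h4y]
    have : x*y*y*x = (x*y)^2 := by ring
    rw [this, Real.sqrt_sq (by positivity)]
  unfold fR
  rw [this]; linarith

lemma le_of_sq_le_sq'' {x y : ℝ} (hx : 0 ≤ x) (hy : 0 ≤ y) (h : x^2 ≤ y^2) : x ≤ y := by
  nlinarith

lemma cs3 {q u v u' v' α β : ℝ} (hq0 : 0 ≤ q) (hq1 : q ≤ 1) :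
    (q*(u*v) + (1-q)*(u'*v') + (q*(1-q))*(α*β))^2
      ≤ (q*u^2 + (1-q)*u'^2 + (q*(1-q))*α^2) * (q*v^2 + (1-q)*v'^2 + (q*(1-q))*β^2) := by
  nlinarith [sq_nonneg (u*v' - u'*v), sq_nonneg (u*β - α*v), sq_nonneg (u'*β - α*v'),
    mul_nonneg hq0 (sub_nonneg.2 hq1), sq_nonneg q, sq_nonneg (1-q),
    mul_nonneg (mul_nonneg hq0 hq0) (sub_nonneg.2 hq1),
    mul_nonneg (mul_nonneg hq0 (sub_nonneg.2 hq1)) (sub_nonneg.2 hq1),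
    sq_nonneg (q*(1-q))]

lemma f_convex {q a b a' b' : ℝ} (hq0 : 0 ≤ q) (hq1 : q ≤ 1)
    (ha : 0 ≤ a) (ha4 : a ≤ 4) (hb : 0 ≤ b) (hb4 : b ≤ 4)
    (ha' : 0 ≤ a') (ha4' : a' ≤ 4) (hb' : 0 ≤ b') (hb4' : b' ≤ 4) :
    fR (q*a + (1-q)*a') (q*b + (1-q)*b') ≤ q * fR a b + (1-q) * fR a' b' := by
  set A := q*a + (1-q)*a' with hA
  set B := q*b + (1-q)*b' with hB
  have hA0 : 0 ≤ A := by nlinarith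
  have hA4 : A ≤ 4 := by nlinarith
  have hB0 : 0 ≤ B := by nlinarith
  have hB4 : B ≤ 4 := by nlinarith
  set u := Real.sqrt (a*(4-a)) with hu
  set v := Real.sqrt (b*(4-b)) with hv
  set u' := Real.sqrt (a'*(4-a')) with hu'
  set v' := Real.sqrt (b'*(4-b')) with hv'
  set U := Real.sqrt (A*(4-A)) with hU
  set V := Real.sqrt (B*(4-B)) with hV
  have hu2 : u^2 = a*(4-a) := Real.sq_sqrt (mul_nonneg ha (by linarith))
  have hv2 : v^2 = b*(4-b) := Real.sq_sqrt (mul_nonneg hb (by linarith))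
  have hu'2 : u'^2 = a'*(4-a') := Real.sq_sqrt (mul_nonneg ha' (by linarith))
  have hv'2 : v'^2 = b'*(4-b') := Real.sq_sqrt (mul_nonneg hb' (by linarith))
  have hU2 : U^2 = A*(4-A) := Real.sq_sqrt (mul_nonneg hA0 (by linarith))
  have hV2 : V^2 = B*(4-B) := Real.sq_sqrt (mul_nonneg hB0 (by linarith))
  have hun : 0 ≤ u := Real.sqrt_nonneg _
  have hvn : 0 ≤ v := Real.sqrt_nonneg _
  have hu'n : 0 ≤ u' := Real.sqrt_nonneg _
  have hv'n : 0 ≤ v' := Real.sqrt_nonneg _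
  have hUn : 0 ≤ U := Real.sqrt_nonneg _
  have hVn : 0 ≤ V := Real.sqrt_nonneg _
  -- key Cauchy-Schwarz inequality
  have key : q*(u*v) + (1-q)*(u'*v') + (q*(1-q))*(|a - a'| * |b - b'|) ≤ U*V := by
    have hL0 : 0 ≤ q*(u*v) + (1-q)*(u'*v') + (q*(1-q))*(|a - a'| * |b - b'|) := by
      have := abs_nonneg (a-a'); have := abs_nonneg (b-b')
      have h1q : 0 ≤ 1 - q := by linarith
      positivity
    have hsq := cs3 (u:=u) (v:=v) (u':=u') (v':=v') (α:=|a-a'|) (β:=|b-b'|) hq0 hq1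
    have hα2 : |a-a'|^2 = (a-a')^2 := sq_abs _
    have hβ2 : |b-b'|^2 = (b-b')^2 := sq_abs _
    have hUeq : q*u^2 + (1-q)*u'^2 + (q*(1-q))*|a-a'|^2 = U^2 := by
      rw [hα2, hU2, hu2, hu'2, hA]; ring
    have hVeq : q*v^2 + (1-q)*v'^2 + (q*(1-q))*|b-b'|^2 = V^2 := by
      rw [hβ2, hV2, hv2, hv'2, hB]; ring
    rw [hUeq, hVeq] at hsq
    have h2 : (U*V)^2 = U^2*V^2 := by ring
    exact le_of_sq_le_sq'' hL0 (mul_nonneg hUn hVn) (h2 ▸ hsq)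
  -- translate into statement about fR
  have habs : -(|a - a'| * |b - b'|) ≤ (a-a')*(b-b') := by
    rw [← abs_mul]; exact neg_abs_le _
  have h1q : (0:ℝ) ≤ 1 - q := by linarith
  have hmul := mul_le_mul_of_nonneg_left habs (mul_nonneg hq0 h1q)
  have hsAB : Real.sqrt (A*B*(4-A)*(4-B)) = U*V := by
    rw [hU, hV, sqrt_regroup (mul_nonneg hA0 (by linarith)) (mul_nonneg hB0 (by linarith))]
    congr 1; ring
  have hsab : Real.sqrt (a*b*(4-a)*(4-b)) = u*v := by
    rw [hu, hv, sqrt_regroup (mul_nonneg ha (by linarith)) (mul_nonneg hb (by linarith))]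
    congr 1; ring
  have hsab' : Real.sqrt (a'*b'*(4-a')*(4-b')) = u'*v' := by
    rw [hu', hv', sqrt_regroup (mul_nonneg ha' (by linarith)) (mul_nonneg hb' (by linarith))]
    congr 1; ring
  unfold fR
  rw [hsAB, hsab, hsab']
  rw [hA, hB]
  have hfin : q*(u*v) + (1-q)*(u'*v') - U*V ≤ q*(1-q)*((a-a')*(b-b')) := by
    linarith [key, hmul]
  linarith [hfin]

lemma sqrt_am_gm {p r : ℝ} (hp : 0 ≤ p) (hr : 0 ≤ r) :
    Real.sqrt (p*r) ≤ (p+r)/2 := by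
  have h1 : p*r ≤ ((p+r)/2)^2 := by nlinarith [sq_nonneg (p-r)]
  calc Real.sqrt (p*r) ≤ Real.sqrt (((p+r)/2)^2) := Real.sqrt_le_sqrt h1
    _ = (p+r)/2 := Real.sqrt_sq (by linarith)

lemma rep_forward {a b c : ℝ} (h : Representable a b c) :
    a + b ≤ 4 ∧ c ≤ fR a b := by
  obtain ⟨a1, a2, b1, b3, c2, c3, ha1, ha2, hb1, hb3, hc2, hc3, hea, heb, hec, hs1, hs2, hs3⟩ := h
  simp only [Set.mem_Icc] at ha1 ha2 hb1 hb3 hc2 hc3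
  obtain ⟨ha1l, ha1u⟩ := ha1; obtain ⟨ha2l, ha2u⟩ := ha2
  obtain ⟨hb1l, hb1u⟩ := hb1; obtain ⟨hb3l, hb3u⟩ := hb3
  obtain ⟨hc2l, hc2u⟩ := hc2; obtain ⟨hc3l, hc3u⟩ := hc3
  subst hea heb hec
  have ha0 : 0 ≤ a1*a2 := mul_nonneg ha1l ha2l
  have hb0 : 0 ≤ b1*b3 := mul_nonneg hb1l hb3l
  have hab4 : a1*a2 + b1*b3 ≤ 4 := by nlinarith
  have ha4 : a1*a2 ≤ 4 := by nlinarith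
  have hb4 : b1*b3 ≤ 4 := by nlinarith
  refine ⟨hab4, ?_⟩
  set X := Real.sqrt ((a1*a2)*(4-b1*b3)) with hX
  set Y := Real.sqrt ((b1*b3)*(4-a1*a2)) with hY
  have hXn : 0 ≤ X := Real.sqrt_nonneg _
  have hYn : 0 ≤ Y := Real.sqrt_nonneg _
  have hX2 : X^2 = (a1*a2)*(4-b1*b3) := Real.sq_sqrt (mul_nonneg ha0 (by linarith))
  have hY2 : Y^2 = (b1*b3)*(4-a1*a2) := Real.sq_sqrt (mul_nonneg hb0 (by linarith))
  have hXY : X*Y ≤ (a1*b3*(4-a1*a2) + b1*a2*(4-b1*b3))/2 := by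
    have hradeq : ((a1*a2)*(4-b1*b3)) * ((b1*b3)*(4-a1*a2))
        = (a1*b3*(4-a1*a2)) * (b1*a2*(4-b1*b3)) := by ring
    rw [hX, hY, sqrt_regroup (mul_nonneg ha0 (by linarith)) (mul_nonneg hb0 (by linarith)),
      hradeq]
    exact sqrt_am_gm (mul_nonneg (mul_nonneg ha1l hb3l) (by linarith))
      (mul_nonneg (mul_nonneg hb1l ha2l) (by linarith))
  -- polynomial inequality
  have h2σ : 0 ≤ 2 - (a1+b1) := by linarith
  have hf2 : 0 ≤ 4*(a2+b3) - (2+(a1+b1))*(a2*b3) := by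
    nlinarith [mul_nonneg ha2l (show (0:ℝ) ≤ 2 - b3 by linarith),
      mul_nonneg hb3l (show (0:ℝ) ≤ 2 - a2 by linarith),
      mul_nonneg (mul_nonneg ha2l hb3l) h2σ]
  have hpoly : (a1*a2)*(4-b1*b3) + (b1*b3)*(4-a1*a2)
      + (a1*b3*(4-a1*a2) + b1*a2*(4-b1*b3)) ≤ 8*a2 + 8*b3 - 4*(a2*b3) := by
    nlinarith [mul_nonneg h2σ hf2]
  have hc : c2*c3 ≤ (2-a2)*(2-b3) := by nlinarith
  have hsab : Real.sqrt ((a1*a2)*(b1*b3)*(4-a1*a2)*(4-b1*b3)) = X*Y := by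
    rw [hX, hY, sqrt_regroup (mul_nonneg ha0 (by linarith)) (mul_nonneg hb0 (by linarith))]
    congr 1; ring
  unfold fR
  rw [hsab]
  linarith [hpoly, hXY, hX2, hY2, hc]

lemma sqrt_four : Real.sqrt 4 = 2 := by
  rw [show (4:ℝ) = 2^2 by norm_num, Real.sqrt_sq (by norm_num)]

set_option maxHeartbeats 4000000 in
lemma rep_backward {a b c : ℝ} (ha : 0 ≤ a) (hb : 0 ≤ b) (hc : 0 ≤ c)
    (hab : a + b ≤ 4) (hcf : c ≤ fR a b) : Representable a b c := by
  have ha4 : a ≤ 4 := by linarith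
  have hb4 : b ≤ 4 := by linarith
  -- the square identity
  set sa := Real.sqrt a with hsa
  set sb := Real.sqrt b with hsb
  set ta := Real.sqrt (4-a) with hta
  set tb := Real.sqrt (4-b) with htb
  set sc := Real.sqrt c with hsc
  have hsan : 0 ≤ sa := Real.sqrt_nonneg _
  have hsbn : 0 ≤ sb := Real.sqrt_nonneg _
  have htan : 0 ≤ ta := Real.sqrt_nonneg _
  have htbn : 0 ≤ tb := Real.sqrt_nonneg _
  have hscn : 0 ≤ sc := Real.sqrt_nonneg _
  have hsa2 : sa^2 = a := Real.sq_sqrt ha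
  have hsb2 : sb^2 = b := Real.sq_sqrt hb
  have hta2 : ta^2 = 4-a := Real.sq_sqrt (by linarith)
  have htb2 : tb^2 = 4-b := Real.sq_sqrt (by linarith)
  have hsc2 : sc^2 = c := Real.sq_sqrt hc
  have hδ : sa*sb ≤ ta*tb := by
    rw [hsa, hsb, hta, htb, sqrt_regroup ha hb, sqrt_regroup (by linarith) (by linarith)]
    exact Real.sqrt_le_sqrt (by nlinarith)
  have hfδ : 4 * fR a b = (ta*tb - sa*sb)^2 := by
    rw [f_eq_sq ha ha4 hb hb4]
  have h2sc : 2*sc ≤ ta*tb - sa*sb := by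
    refine le_of_sq_le_sq'' (by linarith) (by linarith) ?_
    calc (2*sc)^2 = 4*c := by rw [← hsc2]; ring
      _ ≤ 4 * fR a b := by linarith
      _ = (ta*tb - sa*sb)^2 := hfδ
  rcases eq_or_lt_of_le ha4 with haeq | halt
  · -- a = 4, so b = 0, c = 0
    have hb0 : b = 0 := by linarith
    have hc0 : c = 0 := by
      have : fR a b = 0 := f_boundary ha hb (by linarith)
      linarith
    exact ⟨2, 2, 0, 0, 0, 0, by simp, by simp, by simp, by simp, by simp, by simp,
      by rw [haeq]; norm_num, by rw [hb0]; ring, by rw [hc0]; ring,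
      by norm_num, by norm_num, by norm_num⟩
  rcases eq_or_lt_of_le hb4 with hbeq | hblt
  · -- b = 4, so a = 0, c = 0
    have ha0 : a = 0 := by linarith
    have hc0 : c = 0 := by
      have : fR a b = 0 := f_boundary ha hb (by linarith)
      linarith
    exact ⟨0, 0, 2, 2, 0, 0, by simp, by simp, by simp, by simp, by simp, by simp,
      by rw [ha0]; ring, by rw [hbeq]; norm_num, by rw [hc0]; ring,
      by norm_num, by norm_num, by norm_num⟩
  -- main case : a < 4, b < 4
  have htap : 0 < ta := Real.sqrt_pos.2 (by linarith)
  have htbp : 0 < tb := Real.sqrt_pos.2 (by linarith)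
  clear_value sa sb ta tb sc
  have hσn : 0 ≤ sa*tb + sb*ta := add_nonneg (mul_nonneg hsan htbn) (mul_nonneg hsbn htan)
  rcases eq_or_lt_of_le hσn with hσ0 | hσp
  · -- σ = 0 : a = 0 and b = 0
    have hsa0 : sa = 0 := by nlinarith [mul_nonneg hsan htbn, mul_nonneg hsbn htan]
    have hsb0 : sb = 0 := by nlinarith [mul_nonneg hsan htbn, mul_nonneg hsbn htan]
    have ha0 : a = 0 := by rw [← hsa2, hsa0]; ring
    have hb0 : b = 0 := by rw [← hsb2, hsb0]; ring
    have hsc4 : sc ≤ 2 := by nlinarith [h2sc, hsa0, hsb0, hta2, htb2, ha0, hb0]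
    exact ⟨0, 0, 0, 0, sc, sc, by simp, by simp, by simp, by simp,
      Set.mem_Icc.2 ⟨hscn, hsc4⟩, Set.mem_Icc.2 ⟨hscn, hsc4⟩,
      by rw [ha0]; ring, by rw [hb0]; ring, by rw [← hsc2]; ring,
      by norm_num, by simpa using hsc4, by simpa using hsc4⟩
  -- σ > 0
  have hσne : sa*tb + sb*ta ≠ 0 := ne_of_gt hσp
  have htane : ta ≠ 0 := ne_of_gt htap
  have htbne : tb ≠ 0 := ne_of_gt htbp
  have hkeya : sa*(sa*tb + sb*ta) ≤ 4*tb := by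
    have h1 : sa*sb*ta ≤ (ta*tb)*ta := mul_le_mul_of_nonneg_right hδ htan
    nlinarith [hsa2, hta2, mul_nonneg hsan htbn]
  have hkeyb : sb*(sa*tb + sb*ta) ≤ 4*ta := by
    have h1 : sa*sb*tb ≤ (ta*tb)*tb := mul_le_mul_of_nonneg_right hδ htbn
    nlinarith [hsb2, htb2, mul_nonneg hsbn htan]
  have hkeyc2 : sa*(sa*tb + sb*ta) + 2*(sc*ta) ≤ 4*tb := by
    have h1 : (2*sc)*ta ≤ (ta*tb - sa*sb)*ta := mul_le_mul_of_nonneg_right h2sc htan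
    nlinarith [hsa2, hta2, mul_nonneg hsan htbn]
  have hkeyc3 : sb*(sa*tb + sb*ta) + 2*(sc*tb) ≤ 4*ta := by
    have h1 : (2*sc)*tb ≤ (ta*tb - sa*sb)*tb := mul_le_mul_of_nonneg_right h2sc htbn
    nlinarith [hsb2, htb2, mul_nonneg hsbn htan]
  refine ⟨2*sa*tb/(sa*tb + sb*ta), sa*(sa*tb + sb*ta)/(2*tb),
    2*sb*ta/(sa*tb + sb*ta), sb*(sa*tb + sb*ta)/(2*ta), sc*ta/tb, sc*tb/ta,
    ?_, ?_, ?_, ?_, ?_, ?_, ?_, ?_, ?_, ?_, ?_, ?_⟩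
  · refine Set.mem_Icc.2 ⟨div_nonneg (by nlinarith [mul_nonneg hsan htbn]) hσn, ?_⟩
    rw [div_le_iff₀ hσp]
    nlinarith [mul_nonneg hsbn htan]
  · refine Set.mem_Icc.2 ⟨div_nonneg (mul_nonneg hsan hσn) (by linarith), ?_⟩
    rw [div_le_iff₀ (show (0:ℝ) < 2*tb by linarith)]
    nlinarith [hkeya]
  · refine Set.mem_Icc.2 ⟨div_nonneg (by nlinarith [mul_nonneg hsbn htan]) hσn, ?_⟩
    rw [div_le_iff₀ hσp]
    nlinarith [mul_nonneg hsan htbn]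
  · refine Set.mem_Icc.2 ⟨div_nonneg (mul_nonneg hsbn hσn) (by linarith), ?_⟩
    rw [div_le_iff₀ (show (0:ℝ) < 2*ta by linarith)]
    nlinarith [hkeyb]
  · refine Set.mem_Icc.2 ⟨div_nonneg (mul_nonneg hscn htan) htbn, ?_⟩
    rw [div_le_iff₀ htbp]
    nlinarith [hkeyc2, mul_nonneg hsan (mul_nonneg hsbn htan), mul_nonneg hsan htbn, hsa2]
  · refine Set.mem_Icc.2 ⟨div_nonneg (mul_nonneg hscn htbn) htan, ?_⟩
    rw [div_le_iff₀ htap]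
    nlinarith [hkeyc3, mul_nonneg hsbn (mul_nonneg hsan htbn), mul_nonneg hsbn htan, hsb2]
  · field_simp
    linear_combination hsa2
  · field_simp
    linear_combination hsb2
  · field_simp
    linear_combination hsc2
  · have heq : 2*sa*tb/(sa*tb + sb*ta) + 2*sb*ta/(sa*tb + sb*ta) = 2 := by
      field_simp
    linarith [heq]
  · have heq : sa*(sa*tb + sb*ta)/(2*tb) + sc*ta/tb = (sa*(sa*tb + sb*ta) + 2*(sc*ta))/(2*tb) := by
      field_simp
    rw [heq, div_le_iff₀ (show (0:ℝ) < 2*tb by linarith)]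
    linarith [hkeyc2]
  · have heq : sb*(sa*tb + sb*ta)/(2*ta) + sc*tb/ta = (sb*(sa*tb + sb*ta) + 2*(sc*tb))/(2*ta) := by
      field_simp
    rw [heq, div_le_iff₀ (show (0:ℝ) < 2*ta by linarith)]
    linarith [hkeyc3]

lemma case_unbalanced {q a b c a' b' c' : ℝ} (hq : 0 < q) (hq1 : q < 1)
    (ha : 0 ≤ a) (hb : 0 ≤ b) (hc : 0 ≤ c)
    (ha' : 0 ≤ a') (hb' : 0 ≤ b') (hc' : 0 ≤ c')
    (hab : 4 < a + b) (hab' : a' + b' ≤ 4)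
    (hout' : ¬ Representable a' b' c')
    (hM : Representable (q*a + (1-q)*a') (q*b + (1-q)*b') (q*c + (1-q)*c')) : False := by
  obtain ⟨hAB4, hCf⟩ := rep_forward hM
  have hden : 0 < (a+b) - (a'+b') := by linarith
  set lam := (4 - (a'+b'))/((a+b) - (a'+b')) with hlam
  have hlam_mul : lam * ((a+b) - (a'+b')) = 4 - (a'+b') := div_mul_cancel₀ _ (ne_of_gt hden)
  have hqlam : q ≤ lam := by
    rw [hlam, le_div_iff₀ hden]
    nlinarith [hAB4]
  have hlam1 : lam < 1 := by
    rw [hlam, div_lt_one hden]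
    linarith
  have hlampos : 0 < lam := lt_of_lt_of_le hq hqlam
  set ν := q / lam with hν
  have hν0 : 0 ≤ ν := div_nonneg hq.le hlampos.le
  have hν1 : ν ≤ 1 := (div_le_one hlampos).2 hqlam
  have hνq : q ≤ ν := by
    rw [hν, le_div_iff₀ hlampos]
    nlinarith
  have hνlam : ν * lam = q := div_mul_cancel₀ q (ne_of_gt hlampos)
  -- tilde point
  set ta := lam*a + (1-lam)*a' with hta
  set tb := lam*b + (1-lam)*b' with htb
  have htann : 0 ≤ ta := by
    rw [hta]
    have := mul_nonneg hlampos.le ha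
    have := mul_nonneg (show (0:ℝ) ≤ 1 - lam by linarith) ha'
    linarith
  have htbnn : 0 ≤ tb := by
    rw [htb]
    have := mul_nonneg hlampos.le hb
    have := mul_nonneg (show (0:ℝ) ≤ 1 - lam by linarith) hb'
    linarith
  have htsum : ta + tb = 4 := by
    rw [hta, htb]
    nlinarith [hlam_mul]
  have hta4 : ta ≤ 4 := by linarith
  have htb4 : tb ≤ 4 := by linarith
  have hf0 : fR ta tb = 0 := f_boundary htann htbnn htsum
  have heqA : ν*ta + (1-ν)*a' = q*a + (1-q)*a' := by
    rw [hta]; linear_combination (a - a') * hνlam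
  have heqB : ν*tb + (1-ν)*b' = q*b + (1-q)*b' := by
    rw [htb]; linear_combination (b - b') * hνlam
  have hconv := f_convex hν0 hν1 htann hta4 htbnn htb4 ha' (by linarith) hb' (by linarith)
  rw [heqA, heqB, hf0] at hconv
  have hfnn' : 0 ≤ fR a' b' := f_nonneg ha' (by linarith) hb' (by linarith)
  have hcgt' : fR a' b' < c' := by
    by_contra hle
    exact hout' (rep_backward ha' hb' hc' hab' (by linarith))
  have m1 : (1-q)*(fR a' b') < (1-q)*c' := by
    have h1q : 0 < 1 - q := by linarith
    exact (mul_lt_mul_iff_right₀ h1q).2 hcgt'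
  have m2 : (1-ν)*(fR a' b') ≤ (1-q)*(fR a' b') :=
    mul_le_mul_of_nonneg_right (by linarith) hfnn'
  have m3 : 0 ≤ q*c := mul_nonneg hq.le hc
  linarith [hCf, hconv, m1, m2, m3]

theorem stmt_15 :
    ¬ ∃ q ∈ Set.Icc (0:ℝ) 1, ∃ s s' : ℝ × ℝ × ℝ,
        Nonneg3 s ∧ s ∉ SRep ∧ Nonneg3 s' ∧ s' ∉ SRep ∧
        q • s + (1 - q) • s' ∈ SRep := by
  rintro ⟨q, ⟨hq0, hq1⟩, s, s', ⟨ha, hb, hc⟩, hso, ⟨ha', hb', hc'⟩, hso', hM⟩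
  have hout : ¬ Representable s.1 s.2.1 s.2.2 := fun h => hso h
  have hout' : ¬ Representable s'.1 s'.2.1 s'.2.2 := fun h => hso' h
  have hM' : Representable (q*s.1 + (1-q)*s'.1) (q*s.2.1 + (1-q)*s'.2.1)
      (q*s.2.2 + (1-q)*s'.2.2) := by
    have : q • s + (1 - q) • s' ∈ SRep := hM
    simpa [SRep, Set.mem_setOf_eq, Prod.fst_add, Prod.snd_add, Prod.smul_fst, Prod.smul_snd,
      smul_eq_mul] using this
  rcases eq_or_lt_of_le hq0 with hq0' | hqpos
  · -- q = 0
    refine hout' ?_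
    have : q*s.1 + (1-q)*s'.1 = s'.1 := by rw [← hq0']; ring
    rw [this] at hM'
    have : q*s.2.1 + (1-q)*s'.2.1 = s'.2.1 := by rw [← hq0']; ring
    rw [this] at hM'
    have : q*s.2.2 + (1-q)*s'.2.2 = s'.2.2 := by rw [← hq0']; ring
    rwa [this] at hM'
  rcases eq_or_lt_of_le hq1 with hq1' | hqlt1
  · -- q = 1
    refine hout ?_
    have : q*s.1 + (1-q)*s'.1 = s.1 := by rw [hq1']; ring
    rw [this] at hM'
    have : q*s.2.1 + (1-q)*s'.2.1 = s.2.1 := by rw [hq1']; ring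
    rw [this] at hM'
    have : q*s.2.2 + (1-q)*s'.2.2 = s.2.2 := by rw [hq1']; ring
    rwa [this] at hM'
  obtain ⟨hAB4, hCf⟩ := rep_forward hM'
  by_cases hab : s.1 + s.2.1 ≤ 4
  · by_cases hab' : s'.1 + s'.2.1 ≤ 4
    · -- both in domain
      have hcgt : fR s.1 s.2.1 < s.2.2 := by
        by_contra hle
        exact hout (rep_backward ha hb hc hab (by linarith))
      have hcgt' : fR s'.1 s'.2.1 < s'.2.2 := by
        by_contra hle
        exact hout' (rep_backward ha' hb' hc' hab' (by linarith))
      have hconv := f_convex hq0 (le_of_lt hqlt1) ha (by linarith) hb (by linarith)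
        ha' (by linarith) hb' (by linarith)
      have m1 : q*(fR s.1 s.2.1) < q*s.2.2 := (mul_lt_mul_iff_right₀ hqpos).2 hcgt
      have m2 : (1-q)*(fR s'.1 s'.2.1) < (1-q)*s'.2.2 :=
        (mul_lt_mul_iff_right₀ (by linarith)).2 hcgt'
      linarith [hCf, hconv, m1, m2]
    · -- s' out of domain
      push_neg at hab'
      exact case_unbalanced (by linarith : (0:ℝ) < 1 - q) (by linarith)
        ha' hb' hc' ha hb hc hab' hab hout
        (by
          have e1 : (1-q)*s'.1 + (1-(1-q))*s.1 = q*s.1 + (1-q)*s'.1 := by ring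
          have e2 : (1-q)*s'.2.1 + (1-(1-q))*s.2.1 = q*s.2.1 + (1-q)*s'.2.1 := by ring
          have e3 : (1-q)*s'.2.2 + (1-(1-q))*s.2.2 = q*s.2.2 + (1-q)*s'.2.2 := by ring
          rw [e1, e2, e3]; exact hM')
  · push_neg at hab
    have hab' : s'.1 + s'.2.1 ≤ 4 := by
      by_contra hab2
      push_neg at hab2
      nlinarith [hAB4]
    exact case_unbalanced hqpos hqlt1 ha hb hc ha' hb' hc' hab hab' hout' hM'
end

section
/- Let $(\Omega, \Pr)$ be a finite probability space, let $X : \Omega \to \{y_1,\dots,y_k\}$ be a random variable, let $A, B, C \subseteq \Omega$ be events with positive probability, and let $(a,b,c)$ be a representable triple. Then there exists a value $y$ with $\Pr[X = y] > 0$ and a representable triple $(a',b',c')$ such that $a' \geq \frac{\Pr[A \mid X=y]}{\Pr[A]} \cdot a$, $b' \geq \frac{\Pr[B \mid X=y]}{\Pr[B]} \cdot b$, and $c' \geq \frac{\Pr[C \mid X=y]}{\Pr[C]} \cdot c$. -/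
open Finset

set_option maxHeartbeats 1000000 in
theorem T7' (p q r e x y z : ℝ) (hp : 0 < p) (hq : 0 < q) (hr : 0 < r)
    (he : e = p*q*r)
    (h0 : p^2+q^2+r^2+e = 4)
    (hx : 0 ≤ x) (hy : 0 ≤ y) (hz : 0 ≤ z)
    (hD : 4 ≤ p^2*x^2 + q^2*y^2 + r^2*z^2 + e*(x*y*z)) :
    8 + e ≤ (2*p^2+e)*x^2 + (2*q^2+e)*y^2 + (2*r^2+e)*z^2 := by
  have he' : 0 < e := he ▸ mul_pos (mul_pos hp hq) hr
  rcases le_or_gt 1 x with hx1 | hx1 <;> rcases le_or_gt 1 y with hy1 | hy1 <;>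
    rcases le_or_gt 1 z with hz1 | hz1
  -- TTT
  · nlinarith [mul_nonneg (by positivity : (0:ℝ) ≤ 2*p^2+e) (by nlinarith : (0:ℝ) ≤ x^2-1),
      mul_nonneg (by positivity : (0:ℝ) ≤ 2*q^2+e) (by nlinarith : (0:ℝ) ≤ y^2-1),
      mul_nonneg (by positivity : (0:ℝ) ≤ 2*r^2+e) (by nlinarith : (0:ℝ) ≤ z^2-1)]
  -- TTF
  · have hW : 0 ≤ x^2+y^2+z^2-2*(x*y*z)-1 := by
      nlinarith [sq_nonneg (x-y), mul_nonneg (by linarith : (0:ℝ) ≤ 1-z)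
        (by nlinarith : (0:ℝ) ≤ 2*(x*y)-1-z)]
    have hprod := mul_nonneg he'.le hW
    linarith
  -- TFT
  · have hW : 0 ≤ x^2+y^2+z^2-2*(x*y*z)-1 := by
      nlinarith [sq_nonneg (x-z), mul_nonneg (by linarith : (0:ℝ) ≤ 1-y)
        (by nlinarith : (0:ℝ) ≤ 2*(x*z)-1-y)]
    have hprod := mul_nonneg he'.le hW
    linarith
  -- TFF
  · have hW : 0 ≤ x^2+y^2+z^2-2*(x*y*z)-1 := by
      nlinarith [sq_nonneg (y-z), mul_nonneg
        (by linarith : (0:ℝ) ≤ x-1)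
        (by nlinarith [mul_nonneg hy hz] : (0:ℝ) ≤ 1+x-2*(y*z))]
    have hprod := mul_nonneg he'.le hW
    linarith
  -- FTT
  · have hW : 0 ≤ x^2+y^2+z^2-2*(x*y*z)-1 := by
      nlinarith [sq_nonneg (y-z), mul_nonneg (by linarith : (0:ℝ) ≤ 1-x)
        (by nlinarith : (0:ℝ) ≤ 2*(y*z)-1-x)]
    have hprod := mul_nonneg he'.le hW
    linarith
  -- FTF
  · have hW : 0 ≤ x^2+y^2+z^2-2*(x*y*z)-1 := by
      nlinarith [sq_nonneg (x-z), mul_nonneg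
        (by linarith : (0:ℝ) ≤ y-1)
        (by nlinarith [mul_nonneg hx hz] : (0:ℝ) ≤ 1+y-2*(x*z))]
    have hprod := mul_nonneg he'.le hW
    linarith
  -- FFT
  · have hW : 0 ≤ x^2+y^2+z^2-2*(x*y*z)-1 := by
      nlinarith [sq_nonneg (x-y), mul_nonneg
        (by linarith : (0:ℝ) ≤ z-1)
        (by nlinarith [mul_nonneg hx hy] : (0:ℝ) ≤ 1+z-2*(x*y))]
    have hprod := mul_nonneg he'.le hW
    linarith
  -- FFF
  · exfalso
    have h1 : p^2*x^2 < p^2 := by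
      have := mul_pos (pow_pos hp 2) (show (0:ℝ) < 1 - x^2 by nlinarith)
      nlinarith
    have h2 : q^2*y^2 < q^2 := by
      have := mul_pos (pow_pos hq 2) (show (0:ℝ) < 1 - y^2 by nlinarith)
      nlinarith
    have h3 : r^2*z^2 < r^2 := by
      have := mul_pos (pow_pos hr 2) (show (0:ℝ) < 1 - z^2 by nlinarith)
      nlinarith
    have h4 : e*(x*y*z) < e := by
      have : x*y*z < 1 := by nlinarith [mul_nonneg hx hy, mul_nonneg (mul_nonneg hx hy) hz]
      nlinarith
    linarith

theorem rep_bound {a b c : ℝ} (h : Representable a b c) :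
    0 ≤ a ∧ 0 ≤ b ∧ 0 ≤ c ∧ a + b + c + Real.sqrt (a*b*c) ≤ 4 := by
  obtain ⟨a1, a2, b1, b3, c2, c3, ⟨h10,h12⟩, ⟨h20,h22⟩, ⟨h30,h32⟩, ⟨h40,h42⟩,
    ⟨h50,h52⟩, ⟨h60,h62⟩, hab, hbb, hcb, s1, s2, s3⟩ := h
  have ha0 : 0 ≤ a := hab ▸ mul_nonneg h10 h20
  have hb0 : 0 ≤ b := hbb ▸ mul_nonneg h30 h40
  have hc0 : 0 ≤ c := hcb ▸ mul_nonneg h50 h60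
  refine ⟨ha0, hb0, hc0, ?_⟩
  have hB0 : 0 ≤ (2-a1)*b3 := mul_nonneg (by linarith) h40
  have hC0 : 0 ≤ (2-a2)*(2-b3) := mul_nonneg (by linarith) (by linarith)
  have hb' : b ≤ (2-a1)*b3 := by rw [← hbb]; nlinarith
  have hc' : c ≤ (2-a2)*(2-b3) := by rw [← hcb]; nlinarith
  have hehat : 0 ≤ 4 - a - (2-a1)*b3 - (2-a2)*(2-b3) := by
    rw [← hab]
    rcases le_or_gt (a1 + b3) 2 with hco | hco
    · nlinarith [mul_nonneg h20 (by linarith : (0:ℝ) ≤ 2 - a1 - b3), mul_nonneg h10 h40]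
    · nlinarith [mul_nonneg (by linarith : (0:ℝ) ≤ 2 - a2) (by linarith : (0:ℝ) ≤ a1 + b3 - 2),
        mul_nonneg (by linarith : (0:ℝ) ≤ 2 - a1) (by linarith : (0:ℝ) ≤ 2 - b3)]
  have hkey : a * ((2-a1)*b3) * ((2-a2)*(2-b3)) ≤ (4 - a - (2-a1)*b3 - (2-a2)*(2-b3))^2 := by
    rw [← hab]
    nlinarith [sq_nonneg ((4-a1*a2)*(b3-1) - (2-a1)*b3 + (2-a2)*(2-b3))]
  have he0 : 0 ≤ 4 - a - b - c := by linarith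
  have habc : a*b*c ≤ (4-a-b-c)^2 := by
    have hs1 : a*b*c ≤ a*b*((2-a2)*(2-b3)) :=
      mul_le_mul_of_nonneg_left hc' (mul_nonneg ha0 hb0)
    have hs2 : a*b*((2-a2)*(2-b3)) ≤ a*((2-a1)*b3)*((2-a2)*(2-b3)) :=
      mul_le_mul_of_nonneg_right (mul_le_mul_of_nonneg_left hb' ha0) hC0
    have hs3 : (4 - a - (2-a1)*b3 - (2-a2)*(2-b3))^2 ≤ (4-a-b-c)^2 := by
      have h1 : 4 - a - (2-a1)*b3 - (2-a2)*(2-b3) ≤ 4-a-b-c := by linarith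
      nlinarith
    linarith
  have hs : Real.sqrt (a*b*c) ≤ 4-a-b-c := by
    calc Real.sqrt (a*b*c) ≤ Real.sqrt ((4-a-b-c)^2) := Real.sqrt_le_sqrt habc
    _ = 4-a-b-c := Real.sqrt_sq he0
  linarith

theorem construct {a b c t : ℝ} (ha : 0 ≤ a) (hb : 0 ≤ b) (hc : 0 ≤ c)
    (ht1 : b/2 ≤ t) (ht2 : t ≤ 2 - c/2)
    (hkey : a ≤ (2 - b/t) * (2 - c/(2-t))) : Representable a b c := by
  have ht0 : 0 ≤ t := le_trans (by positivity) ht1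
  have ht2' : t ≤ 2 := by nlinarith [div_nonneg hc (by norm_num : (0:ℝ) ≤ 2)]
  have hb1 : 0 ≤ b/t := div_nonneg hb ht0
  have hb2 : b/t ≤ 2 := by
    rcases eq_or_lt_of_le ht0 with h0 | h0
    · have hb0 : b = 0 := by
        have h1 : b/2 ≤ 0 := ht1.trans h0.symm.le
        have h2 : 0 ≤ b/2 := by positivity
        have := le_antisymm h1 h2
        field_simp at this; linarith
      rw [hb0]; simp
    · rw [div_le_iff₀ h0]; linarith
  have hc1 : 0 ≤ c/(2-t) := by
    rcases eq_or_lt_of_le ht2' with h2 | h2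
    · rw [h2]; simp
    · exact div_nonneg hc (by linarith)
  have hc2 : c/(2-t) ≤ 2 := by
    rcases eq_or_lt_of_le ht2' with h2 | h2
    · have hc0 : c = 0 := by
        have h1 : c/2 ≤ 0 := by linarith
        have h2' : 0 ≤ c/2 := by positivity
        have := le_antisymm h1 h2'
        field_simp at this; linarith
      rw [hc0]; simp
    · rw [div_le_iff₀ (by linarith : (0:ℝ) < 2 - t)]; linarith
  have ha1 : 0 ≤ 2 - b/t := by linarith
  have ha2 : 0 ≤ a/(2 - b/t) := div_nonneg ha ha1
  have ha3 : a/(2 - b/t) ≤ 2 - c/(2-t) := by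
    rcases eq_or_lt_of_le ha1 with h0 | h0
    · have haz : a = 0 := by
        have : a ≤ 0 := by rw [← h0] at hkey; linarith [hkey]
        linarith
      rw [haz, ← h0]; simp; linarith
    · rw [div_le_iff₀ h0]
      calc a ≤ (2 - b/t) * (2 - c/(2-t)) := hkey
      _ = (2 - c/(2-t)) * (2 - b/t) := by ring
  refine ⟨2 - b/t, a/(2 - b/t), b/t, t, c/(2-t), 2 - t,
    ⟨ha1, by linarith⟩, ⟨ha2, by linarith⟩, ⟨hb1, hb2⟩, ⟨ht0, ht2'⟩,
    ⟨hc1, hc2⟩, ⟨by linarith, by linarith⟩, ?_, ?_, ?_, by linarith, by linarith, by linarith⟩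
  · rcases eq_or_lt_of_le ha1 with h0 | h0
    · have haz : a = 0 := by
        have : a ≤ 0 := by rw [← h0] at hkey; linarith [hkey]
        linarith
      rw [← h0, haz]; simp
    · field_simp
  · rcases eq_or_lt_of_le ht0 with h0 | h0
    · have hb0 : b = 0 := by
        have h1 : b/2 ≤ 0 := ht1.trans h0.symm.le
        have h2 : 0 ≤ b/2 := by positivity
        have := le_antisymm h1 h2
        field_simp at this; linarith
      rw [← h0, hb0]; simp
    · field_simp
  · rcases eq_or_lt_of_le ht2' with h2 | h2
    · have hc0 : c = 0 := by
        have h1 : c/2 ≤ 0 := by linarith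
        have h2' : 0 ≤ c/2 := by positivity
        have := le_antisymm h1 h2'
        field_simp at this; linarith
      rw [h2, hc0]; simp
    · exact div_mul_cancel₀ c (by intro hh; rw [sub_eq_zero] at hh; exact absurd hh.symm (ne_of_lt h2))

theorem rep_of_bound {a b c : ℝ} (ha : 0 ≤ a) (hb : 0 ≤ b) (hc : 0 ≤ c)
    (h : a + b + c + Real.sqrt (a*b*c) ≤ 4) : Representable a b c := by
  have hsq : 0 ≤ Real.sqrt (a*b*c) := Real.sqrt_nonneg _
  have he0 : 0 ≤ 4 - a - b - c := by linarith
  have habc : a*b*c ≤ (4-a-b-c)^2 := by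
    have h1 : Real.sqrt (a*b*c) ≤ 4-a-b-c := by linarith
    have h2 := Real.sq_sqrt (by positivity : (0:ℝ) ≤ a*b*c)
    nlinarith
  have ha4 : a ≤ 4 := by linarith
  rcases eq_or_lt_of_le ha4 with h4 | h4
  · have hb0 : b = 0 := by linarith
    have hc0 : c = 0 := by linarith
    exact ⟨2, 2, 0, 0, 0, 0, ⟨by norm_num, le_refl _⟩, ⟨by norm_num, le_refl _⟩,
      ⟨le_refl _, by norm_num⟩, ⟨le_refl _, by norm_num⟩, ⟨le_refl _, by norm_num⟩,
      ⟨le_refl _, by norm_num⟩, by rw [h4]; norm_num, by rw [hb0]; ring, by rw [hc0]; ring,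
      by norm_num, by norm_num, by norm_num⟩
  · have hm0 : 0 < 4 - a := by linarith
    set t : ℝ := ((4-a) + b - c)/(4-a) with ht
    have htm : t * (4-a) = (4-a) + b - c := by rw [ht]; field_simp
    have ht1 : b/2 ≤ t := by
      rw [ht, div_le_div_iff₀ (by norm_num) hm0]
      nlinarith [mul_nonneg ha hb]
    have ht2 : t ≤ 2 - c/2 := by
      rw [ht, div_le_iff₀ hm0]
      nlinarith [mul_nonneg ha hc]
    have ht0 : 0 ≤ t := le_trans (by positivity) ht1
    have ht2' : t ≤ 2 := by nlinarith [div_nonneg hc (by norm_num : (0:ℝ) ≤ 2)]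
    have hkey : a ≤ (2 - b/t) * (2 - c/(2-t)) := by
      rcases eq_or_lt_of_le ht0 with h0 | h0
      · -- t = 0 : b = 0
        have hb0 : b = 0 := by
          have h1 : b/2 ≤ 0 := ht1.trans h0.symm.le
          have h2 : 0 ≤ b/2 := by positivity
          have := le_antisymm h1 h2
          field_simp at this; linarith
        rw [← h0, hb0]
        norm_num
        nlinarith
      rcases eq_or_lt_of_le ht2' with h2 | h2
      · -- t = 2 : c = 0
        have hc0 : c = 0 := by
          have h1 : c/2 ≤ 0 := by linarith
          have h2' : 0 ≤ c/2 := by positivity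
          have := le_antisymm h1 h2'
          field_simp at this; linarith
        rw [h2, hc0]
        norm_num
        nlinarith
      · -- 0 < t < 2
        have h2t : 0 < 2 - t := by linarith
        have hq : (2 - b/t) = (2*t - b)/t := by field_simp
        have hq2 : (2 - c/(2-t)) = (2*(2-t) - c)/(2-t) := by field_simp
        rw [hq, hq2, div_mul_div_comm, le_div_iff₀ (by positivity)]
        have e1 : (4-a)*(2*t-b) = 2*((4-a)+b-c) - b*(4-a) := by linear_combination 2*htm
        have e3 : (4-a)*(2-t) = (4-a) - b + c := by linear_combination -htm
        have hident : (4-a)^2 * ((2*t-b)*(2*(2-t)-c) - a*(t*(2-t))) =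
            (4-a)*((4-a-b-c)^2 - a*b*c) := by
          calc (4-a)^2 * ((2*t-b)*(2*(2-t)-c) - a*(t*(2-t)))
              = ((4-a)*(2*t-b))*((4-a)*(2-t)*2 - (4-a)*c) - a*(t*(4-a))*((4-a)*(2-t)) := by
                ring
            _ = (2*((4-a)+b-c) - b*(4-a))*(((4-a)-b+c)*2 - (4-a)*c)
                - a*((4-a)+b-c)*((4-a)-b+c) := by rw [e1, e3, htm]
            _ = (4-a)*((4-a-b-c)^2 - a*b*c) := by ring
        have h5 : 0 ≤ (4-a)*((4-a-b-c)^2 - a*b*c) :=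
          mul_nonneg hm0.le (by linarith)
        nlinarith [hident, h5, mul_pos hm0 hm0]
    exact construct ha hb hc ht1 ht2 hkey

theorem plane (p q r e U V W : ℝ) (hp : 0 < p) (hq : 0 < q) (hr : 0 < r)
    (he : e = p*q*r) (h0 : p^2+q^2+r^2+e = 4)
    (hU : 0 ≤ U) (hV : 0 ≤ V) (hW : 0 ≤ W)
    (hD : 4 ≤ U + V + W + Real.sqrt (U*V*W)) :
    8 + e ≤ (2 + e/p^2)*U + (2 + e/q^2)*V + (2 + e/r^2)*W := by
  have e1 : p^2*(Real.sqrt U/p)^2 = U := by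
    rw [div_pow, Real.sq_sqrt hU]; field_simp
  have e2 : q^2*(Real.sqrt V/q)^2 = V := by
    rw [div_pow, Real.sq_sqrt hV]; field_simp
  have e3 : r^2*(Real.sqrt W/r)^2 = W := by
    rw [div_pow, Real.sq_sqrt hW]; field_simp
  have e4 : e*((Real.sqrt U/p)*(Real.sqrt V/q)*(Real.sqrt W/r)) = Real.sqrt (U*V*W) := by
    have h1 : (Real.sqrt U/p)*(Real.sqrt V/q)*(Real.sqrt W/r)
        = (Real.sqrt U*Real.sqrt V*Real.sqrt W)/(p*q*r) := by ring
    have h2 : Real.sqrt (U*V*W) = Real.sqrt U*Real.sqrt V*Real.sqrt W := by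
      rw [Real.sqrt_mul (mul_nonneg hU hV), Real.sqrt_mul hU]
    rw [h1, he, mul_div_cancel₀ _ (by positivity : p*q*r ≠ 0), h2]
  have key := T7' p q r e (Real.sqrt U/p) (Real.sqrt V/q) (Real.sqrt W/r) hp hq hr he h0
    (by positivity) (by positivity) (by positivity)
    (by rw [e1, e2, e3, e4]; exact hD)
  have c1 : (2*p^2+e)*(Real.sqrt U/p)^2 = (2 + e/p^2)*U := by
    rw [div_pow, Real.sq_sqrt hU]; field_simp; try ring
  have c2 : (2*q^2+e)*(Real.sqrt V/q)^2 = (2 + e/q^2)*V := by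
    rw [div_pow, Real.sq_sqrt hV]; field_simp; try ring
  have c3 : (2*r^2+e)*(Real.sqrt W/r)^2 = (2 + e/r^2)*W := by
    rw [div_pow, Real.sq_sqrt hW]; field_simp; try ring
  rw [c1, c2, c3] at key
  exact key

set_option maxHeartbeats 1000000 in
theorem incurved {ι : Type*} (s : Finset ι) (P u v w : ι → ℝ)
    (hP : ∀ i ∈ s, 0 < P i) (hsum : ∑ i ∈ s, P i = 1)
    (hu : ∀ i ∈ s, 0 ≤ u i) (hv : ∀ i ∈ s, 0 ≤ v i) (hw : ∀ i ∈ s, 0 ≤ w i)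
    {a b c : ℝ}
    (ha : ∑ i ∈ s, P i * u i = a) (hb : ∑ i ∈ s, P i * v i = b)
    (hc : ∑ i ∈ s, P i * w i = c)
    (hg : a + b + c + Real.sqrt (a*b*c) ≤ 4)
    (hN : ∀ i ∈ s, 4 < u i + v i + w i + Real.sqrt (u i * v i * w i)) : False := by
  have hne : s.Nonempty := Finset.nonempty_of_sum_ne_zero (by rw [hsum]; exact one_ne_zero)
  have ha0 : 0 ≤ a := ha ▸ Finset.sum_nonneg (fun i hi => mul_nonneg (hP i hi).le (hu i hi))
  have hb0 : 0 ≤ b := hb ▸ Finset.sum_nonneg (fun i hi => mul_nonneg (hP i hi).le (hv i hi))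
  have hc0 : 0 ≤ c := hc ▸ Finset.sum_nonneg (fun i hi => mul_nonneg (hP i hi).le (hw i hi))
  have habc : a + b + c ≤ 4 := by
    have := Real.sqrt_nonneg (a*b*c); linarith
  -- zero cases
  by_cases hA : a = 0
  · have hu0 : ∀ i ∈ s, u i = 0 := by
      intro i hi
      have h1 : ∑ i ∈ s, P i * u i = 0 := by rw [ha, hA]
      have h2 := (Finset.sum_eq_zero_iff_of_nonneg
        (fun j hj => mul_nonneg (hP j hj).le (hu j hj))).mp h1 i hi
      rcases mul_eq_zero.mp h2 with h | h
      · exact absurd h (ne_of_gt (hP i hi))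
      · exact h
    have hlt : ∀ i ∈ s, 4 * P i < P i * (v i + w i) := by
      intro i hi
      have h3 := hN i hi
      rw [hu0 i hi] at h3
      simp at h3
      have := mul_lt_mul_of_pos_left h3 (hP i hi)
      linarith
    have h4 := Finset.sum_lt_sum_of_nonempty hne hlt
    rw [← Finset.mul_sum, hsum, mul_one] at h4
    have h5 : ∑ i ∈ s, P i * (v i + w i) = b + c := by
      simp_rw [mul_add]; rw [Finset.sum_add_distrib, hb, hc]
    rw [h5] at h4
    rw [hA] at hg
    simp at hg
    linarith
  by_cases hB : b = 0
  · have hv0 : ∀ i ∈ s, v i = 0 := by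
      intro i hi
      have h1 : ∑ i ∈ s, P i * v i = 0 := by rw [hb, hB]
      have h2 := (Finset.sum_eq_zero_iff_of_nonneg
        (fun j hj => mul_nonneg (hP j hj).le (hv j hj))).mp h1 i hi
      rcases mul_eq_zero.mp h2 with h | h
      · exact absurd h (ne_of_gt (hP i hi))
      · exact h
    have hlt : ∀ i ∈ s, 4 * P i < P i * (u i + w i) := by
      intro i hi
      have h3 := hN i hi
      rw [hv0 i hi] at h3
      simp at h3
      have := mul_lt_mul_of_pos_left h3 (hP i hi)
      linarith
    have h4 := Finset.sum_lt_sum_of_nonempty hne hlt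
    rw [← Finset.mul_sum, hsum, mul_one] at h4
    have h5 : ∑ i ∈ s, P i * (u i + w i) = a + c := by
      simp_rw [mul_add]; rw [Finset.sum_add_distrib, ha, hc]
    rw [h5] at h4
    rw [hB] at hg
    simp at hg
    linarith
  by_cases hC : c = 0
  · have hw0 : ∀ i ∈ s, w i = 0 := by
      intro i hi
      have h1 : ∑ i ∈ s, P i * w i = 0 := by rw [hc, hC]
      have h2 := (Finset.sum_eq_zero_iff_of_nonneg
        (fun j hj => mul_nonneg (hP j hj).le (hw j hj))).mp h1 i hi
      rcases mul_eq_zero.mp h2 with h | h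
      · exact absurd h (ne_of_gt (hP i hi))
      · exact h
    have hlt : ∀ i ∈ s, 4 * P i < P i * (u i + v i) := by
      intro i hi
      have h3 := hN i hi
      rw [hw0 i hi] at h3
      simp at h3
      have := mul_lt_mul_of_pos_left h3 (hP i hi)
      linarith
    have h4 := Finset.sum_lt_sum_of_nonempty hne hlt
    rw [← Finset.mul_sum, hsum, mul_one] at h4
    have h5 : ∑ i ∈ s, P i * (u i + v i) = a + b := by
      simp_rw [mul_add]; rw [Finset.sum_add_distrib, ha, hb]
    rw [h5] at h4
    rw [hC] at hg
    simp at hg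
    linarith
  -- positive case
  have hA' : 0 < a := lt_of_le_of_ne ha0 (Ne.symm hA)
  have hB' : 0 < b := lt_of_le_of_ne hb0 (Ne.symm hB)
  have hC' : 0 < c := lt_of_le_of_ne hc0 (Ne.symm hC)
  set M : ℝ := s.inf' hne (fun i => u i + v i + w i + Real.sqrt (u i * v i * w i)) with hMdef
  have hM4 : 4 < M := by
    rw [hMdef, Finset.lt_inf'_iff]
    exact hN
  have hM0 : 0 < M := by linarith
  set θ : ℝ := 2/Real.sqrt M with hθdef
  have hθ0 : 0 < θ := div_pos two_pos (Real.sqrt_pos.mpr hM0)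
  have hθsq : θ^2 * M = 4 := by
    rw [hθdef, div_pow, Real.sq_sqrt hM0.le]
    field_simp
    norm_num
  have hθ1 : θ < 1 := by
    rw [hθdef, div_lt_one (Real.sqrt_pos.mpr hM0)]
    have : (2:ℝ) = Real.sqrt 4 := by
      rw [show (4:ℝ) = 2^2 by norm_num, Real.sqrt_sq]; norm_num
    rw [this]
    exact Real.sqrt_lt_sqrt (by norm_num) hM4
  -- scaled point
  have hsqθ1 : Real.sqrt θ ≤ 1 := Real.sqrt_le_one.mpr hθ1.le
  have hsqrtθ : θ ≤ Real.sqrt θ := by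
    linarith [mul_le_mul_of_nonneg_left hsqθ1 (Real.sqrt_nonneg θ),
      Real.sq_sqrt hθ0.le]
  -- sqrt of θ^3 * x
  have hcube : ∀ x : ℝ, 0 ≤ x → Real.sqrt (θ^3 * x) = θ * (Real.sqrt θ * Real.sqrt x) := by
    intro x hx
    rw [show θ^3*x = θ^2*(θ*x) by ring, Real.sqrt_mul (sq_nonneg θ), Real.sqrt_sq hθ0.le,
      Real.sqrt_mul hθ0.le]
  set A := θ*a with hAdef
  set B := θ*b with hBdef
  set C := θ*c with hCdef
  have hA0 : 0 < A := mul_pos hθ0 hA'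
  have hB0 : 0 < B := mul_pos hθ0 hB'
  have hC0 : 0 < C := mul_pos hθ0 hC'
  set S := A + B + C with hSdef
  have hS0 : 0 < S := by positivity
  have hS4 : S < 4 := by
    have h1 : θ*(a+b+c) ≤ θ*4 := mul_le_mul_of_nonneg_left habc hθ0.le
    have h2 : S = θ*(a+b+c) := by rw [hSdef, hAdef, hBdef, hCdef]; ring
    linarith
  have hgm : Real.sqrt (A*B*C) < 4 - S := by
    have h1 : A*B*C = θ^3*(a*b*c) := by rw [hAdef, hBdef, hCdef]; ring
    have h2 : Real.sqrt (A*B*C) ≤ θ * Real.sqrt (a*b*c) := by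
      rw [h1, hcube _ (by positivity)]
      have h3 : Real.sqrt θ * Real.sqrt (a*b*c) ≤ 1 * Real.sqrt (a*b*c) :=
        mul_le_mul_of_nonneg_right hsqθ1 (Real.sqrt_nonneg _)
      calc θ*(Real.sqrt θ * Real.sqrt (a*b*c)) ≤ θ*(1*Real.sqrt (a*b*c)) :=
            mul_le_mul_of_nonneg_left h3 hθ0.le
        _ = θ * Real.sqrt (a*b*c) := by ring
    have h4 : S + θ*Real.sqrt (a*b*c) ≤ θ*4 := by
      have h5 : S = θ*(a+b+c) := by rw [hSdef, hAdef, hBdef, hCdef]; ring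
      rw [h5, ← mul_add]
      exact mul_le_mul_of_nonneg_left hg hθ0.le
    linarith
  -- IVT for τ
  set f : ℝ → ℝ := fun τ => τ^3*(A*B*C) - (4 - τ*S)^2 with hfdef
  have hABClt : A*B*C < (4-S)^2 := by
    nlinarith [Real.sq_sqrt (show (0:ℝ) ≤ A*B*C by positivity),
      Real.sqrt_nonneg (A*B*C), hgm]
  have hf1 : f 1 < 0 := by
    simp only [hfdef]
    nlinarith [hABClt]
  have hf4 : 0 < f (4/S) := by
    simp only [hfdef]
    have h1 : 4 - (4/S)*S = 0 := by field_simp; norm_num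
    rw [h1]
    have h2 : 0 < (4/S)^3*(A*B*C) := by positivity
    nlinarith [h2]
  have h1S : 1 ≤ 4/S := (one_le_div hS0).mpr (by linarith)
  have hfc : ContinuousOn f (Set.Icc 1 (4/S)) := by
    apply Continuous.continuousOn; fun_prop
  obtain ⟨τ, hτmem, hfτ⟩ := intermediate_value_Icc h1S hfc
    (Set.mem_Icc.mpr ⟨hf1.le, hf4.le⟩)
  have hτ1 : 1 < τ := by
    rcases eq_or_lt_of_le hτmem.1 with h | h
    · exfalso; rw [← h] at hfτ; rw [hfτ] at hf1; exact lt_irrefl 0 hf1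
    · exact h
  have hτ0 : 0 < τ := by linarith
  have hτS : τ*S ≤ 4 := by
    have := hτmem.2
    rw [le_div_iff₀ hS0] at this
    linarith
  -- frontier point
  set p := Real.sqrt (τ*A) with hpdef
  set q := Real.sqrt (τ*B) with hqdef
  set r := Real.sqrt (τ*C) with hrdef
  have hp0 : 0 < p := Real.sqrt_pos.mpr (by positivity)
  have hq0 : 0 < q := Real.sqrt_pos.mpr (by positivity)
  have hr0 : 0 < r := Real.sqrt_pos.mpr (by positivity)
  have hp2 : p^2 = τ*A := Real.sq_sqrt (by positivity)
  have hq2 : q^2 = τ*B := Real.sq_sqrt (by positivity)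
  have hr2 : r^2 = τ*C := Real.sq_sqrt (by positivity)
  set e := p*q*r with hedef
  have he0 : 0 < e := by positivity
  have heval : e = 4 - τ*S := by
    have h1 : e = Real.sqrt ((τ*A)*(τ*B)*(τ*C)) := by
      rw [hedef, hpdef, hqdef, hrdef, ← Real.sqrt_mul (by positivity),
        ← Real.sqrt_mul (by positivity)]
    have h2 : (τ*A)*(τ*B)*(τ*C) = τ^3*(A*B*C) := by ring
    have h3 : τ^3*(A*B*C) = (4 - τ*S)^2 := by
      have := hfτ; simp only [hfdef] at this; linarith
    rw [h1, h2, h3, Real.sqrt_sq (by linarith)]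
  have hsurf : p^2+q^2+r^2+e = 4 := by
    rw [hp2, hq2, hr2, heval, hSdef]; ring
  -- apply plane to each point
  have hplane : ∀ i ∈ s, 8 + e ≤ (2 + e/p^2)*(θ*u i) + (2 + e/q^2)*(θ*v i) + (2 + e/r^2)*(θ*w i) := by
    intro i hi
    apply plane p q r e _ _ _ hp0 hq0 hr0 hedef hsurf
      (mul_nonneg hθ0.le (hu i hi)) (mul_nonneg hθ0.le (hv i hi))
      (mul_nonneg hθ0.le (hw i hi))
    -- 4 ≤ θu + θv + θw + sqrt (θu*θv*θw)
    have h1 : (θ*u i)*(θ*v i)*(θ*w i) = θ^3*(u i * v i * w i) := by ring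
    have h2 : Real.sqrt ((θ*u i)*(θ*v i)*(θ*w i)) = θ*(Real.sqrt θ * Real.sqrt (u i*v i*w i)) := by
      rw [h1]; exact hcube _ (mul_nonneg (mul_nonneg (hu i hi) (hv i hi)) (hw i hi))
    have h3 : θ^2 * Real.sqrt (u i*v i*w i) ≤ θ*(Real.sqrt θ * Real.sqrt (u i*v i*w i)) := by
      have h3a := mul_le_mul_of_nonneg_right hsqrtθ (Real.sqrt_nonneg (u i*v i*w i))
      calc θ^2 * Real.sqrt (u i*v i*w i) = θ*(θ*Real.sqrt (u i*v i*w i)) := by ring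
        _ ≤ θ*(Real.sqrt θ * Real.sqrt (u i*v i*w i)) :=
            mul_le_mul_of_nonneg_left h3a hθ0.le
    have h4 : θ^2*(u i) ≤ θ*u i := by
      linarith [mul_nonneg (mul_nonneg hθ0.le (hu i hi)) (show (0:ℝ) ≤ 1-θ by linarith)]
    have h5 : θ^2*(v i) ≤ θ*v i := by
      linarith [mul_nonneg (mul_nonneg hθ0.le (hv i hi)) (show (0:ℝ) ≤ 1-θ by linarith)]
    have h6 : θ^2*(w i) ≤ θ*w i := by
      linarith [mul_nonneg (mul_nonneg hθ0.le (hw i hi)) (show (0:ℝ) ≤ 1-θ by linarith)]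
    have h7 : M ≤ u i + v i + w i + Real.sqrt (u i * v i * w i) := by
      rw [hMdef]; exact Finset.inf'_le _ hi
    have h8 : θ^2*M ≤ θ^2*(u i + v i + w i + Real.sqrt (u i*v i*w i)) :=
      mul_le_mul_of_nonneg_left h7 (by positivity)
    rw [h2]
    linarith [h3, h4, h5, h6, h8, hθsq]
  -- sum up
  have hsum2 := Finset.sum_le_sum (fun i hi => mul_le_mul_of_nonneg_left (hplane i hi) (hP i hi).le)
  have hlhs : ∑ i ∈ s, P i * (8+e) = 8+e := by rw [← Finset.sum_mul, hsum, one_mul]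
  have hrhs : ∑ i ∈ s, P i * ((2 + e/p^2)*(θ*u i) + (2 + e/q^2)*(θ*v i) + (2 + e/r^2)*(θ*w i))
      = (2 + e/p^2)*θ*a + (2 + e/q^2)*θ*b + (2 + e/r^2)*θ*c := by
    rw [Finset.sum_congr rfl (fun i hi => show P i * ((2 + e/p^2)*(θ*u i) + (2 + e/q^2)*(θ*v i)
      + (2 + e/r^2)*(θ*w i)) = (2 + e/p^2)*θ*(P i * u i) + (2 + e/q^2)*θ*(P i * v i)
      + (2 + e/r^2)*θ*(P i * w i) from by ring)]
    rw [Finset.sum_add_distrib, Finset.sum_add_distrib, ← Finset.mul_sum, ← Finset.mul_sum,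
      ← Finset.mul_sum, ha, hb, hc]
  rw [hlhs, hrhs] at hsum2
  have h1τ : θ*a*τ = p^2 := by rw [hp2, hAdef]; ring
  have h2τ : θ*b*τ = q^2 := by rw [hq2, hBdef]; ring
  have h3τ : θ*c*τ = r^2 := by rw [hr2, hCdef]; ring
  have key2 : ((2 + e/p^2)*θ*a + (2 + e/q^2)*θ*b + (2 + e/r^2)*θ*c)*τ = 8+e := by
    calc ((2 + e/p^2)*θ*a + (2 + e/q^2)*θ*b + (2 + e/r^2)*θ*c)*τ
        = (2 + e/p^2)*(θ*a*τ) + (2 + e/q^2)*(θ*b*τ) + (2 + e/r^2)*(θ*c*τ) := by ring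
      _ = (2 + e/p^2)*p^2 + (2 + e/q^2)*q^2 + (2 + e/r^2)*r^2 := by rw [h1τ, h2τ, h3τ]
      _ = 2*(p^2+q^2+r^2) + 3*e := by field_simp; ring
      _ = 8+e := by linarith [hsurf]
  set X := (2 + e/p^2)*θ*a + (2 + e/q^2)*θ*b + (2 + e/r^2)*θ*c with hXdef
  have hX0 : 0 < X := lt_of_lt_of_le (by linarith) hsum2
  have h9 : X*τ ≤ X*1 := by rw [mul_one, key2]; exact hsum2
  have hτle : τ ≤ 1 := le_of_mul_le_mul_left h9 hX0
  linarith

theorem stmt_17 {Ω α : Type*} [Fintype Ω] [DecidableEq α]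
    (w : Ω → ℝ) (hw : ∀ ω, 0 ≤ w ω) (hwsum : ∑ ω, w ω = 1)
    (X : Ω → α) (A B C : Finset Ω)
    (hA : 0 < ∑ ω ∈ A, w ω) (hB : 0 < ∑ ω ∈ B, w ω) (hC : 0 < ∑ ω ∈ C, w ω)
    (a b c : ℝ) (hrep : Representable a b c) :
    ∃ y : α, 0 < ∑ ω ∈ univ.filter (fun ω => X ω = y), w ω ∧
      ∃ a' b' c' : ℝ, Representable a' b' c' ∧
        ((∑ ω ∈ A.filter (fun ω => X ω = y), w ω) /
            (∑ ω ∈ univ.filter (fun ω => X ω = y), w ω)) / (∑ ω ∈ A, w ω) * a ≤ a' ∧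
        ((∑ ω ∈ B.filter (fun ω => X ω = y), w ω) /
            (∑ ω ∈ univ.filter (fun ω => X ω = y), w ω)) / (∑ ω ∈ B, w ω) * b ≤ b' ∧
        ((∑ ω ∈ C.filter (fun ω => X ω = y), w ω) /
            (∑ ω ∈ univ.filter (fun ω => X ω = y), w ω)) / (∑ ω ∈ C, w ω) * c ≤ c' := by
  classical
  by_contra hcon
  push_neg at hcon
  obtain ⟨ha0, hb0, hc0, hg⟩ := rep_bound hrep
  set py : α → ℝ := fun y => ∑ ω ∈ univ.filter (fun ω => X ω = y), w ω with hpydef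
  set qA : α → ℝ := fun y => ∑ ω ∈ A.filter (fun ω => X ω = y), w ω with hqAdef
  set qB : α → ℝ := fun y => ∑ ω ∈ B.filter (fun ω => X ω = y), w ω with hqBdef
  set qC : α → ℝ := fun y => ∑ ω ∈ C.filter (fun ω => X ω = y), w ω with hqCdef
  have hpy0 : ∀ y, 0 ≤ py y := fun y => Finset.sum_nonneg (fun ω _ => hw ω)
  have hqA0 : ∀ y, 0 ≤ qA y := fun y => Finset.sum_nonneg (fun ω _ => hw ω)
  have hqB0 : ∀ y, 0 ≤ qB y := fun y => Finset.sum_nonneg (fun ω _ => hw ω)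
  have hqC0 : ∀ y, 0 ≤ qC y := fun y => Finset.sum_nonneg (fun ω _ => hw ω)
  have hqApy : ∀ y, qA y ≤ py y := fun y =>
    Finset.sum_le_sum_of_subset_of_nonneg
      (Finset.filter_subset_filter _ (Finset.subset_univ A)) (fun ω _ _ => hw ω)
  have hqBpy : ∀ y, qB y ≤ py y := fun y =>
    Finset.sum_le_sum_of_subset_of_nonneg
      (Finset.filter_subset_filter _ (Finset.subset_univ B)) (fun ω _ _ => hw ω)
  have hqCpy : ∀ y, qC y ≤ py y := fun y =>
    Finset.sum_le_sum_of_subset_of_nonneg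
      (Finset.filter_subset_filter _ (Finset.subset_univ C)) (fun ω _ _ => hw ω)
  set T0 : Finset α := univ.image X with hT0def
  set s' : Finset α := T0.filter (fun y => 0 < py y) with hs'def
  have hspos : ∀ y ∈ s', 0 < py y := fun y hy => (Finset.mem_filter.mp hy).2
  -- total sums over T0
  have hTp : ∑ y ∈ T0, py y = 1 := by
    rw [hpydef, hT0def]
    rw [Finset.sum_fiberwise_of_maps_to (fun ω _ => Finset.mem_image_of_mem X (Finset.mem_univ ω)) w]
    exact hwsum
  have hTqA : ∑ y ∈ T0, qA y = ∑ ω ∈ A, w ω := by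
    rw [hqAdef, hT0def]
    exact Finset.sum_fiberwise_of_maps_to (fun ω _ => Finset.mem_image_of_mem X (Finset.mem_univ ω)) w
  have hTqB : ∑ y ∈ T0, qB y = ∑ ω ∈ B, w ω := by
    rw [hqBdef, hT0def]
    exact Finset.sum_fiberwise_of_maps_to (fun ω _ => Finset.mem_image_of_mem X (Finset.mem_univ ω)) w
  have hTqC : ∑ y ∈ T0, qC y = ∑ ω ∈ C, w ω := by
    rw [hqCdef, hT0def]
    exact Finset.sum_fiberwise_of_maps_to (fun ω _ => Finset.mem_image_of_mem X (Finset.mem_univ ω)) w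
  -- restrict to s'
  have hsp : ∑ y ∈ s', py y = 1 := by
    rw [hs'def, Finset.sum_filter_of_ne (fun y _ h => (hpy0 y).lt_of_ne (Ne.symm h)), hTp]
  have hsqA : ∑ y ∈ s', qA y = ∑ ω ∈ A, w ω := by
    rw [hs'def, Finset.sum_filter_of_ne
      (fun y _ h => lt_of_lt_of_le ((hqA0 y).lt_of_ne (Ne.symm h)) (hqApy y)), hTqA]
  have hsqB : ∑ y ∈ s', qB y = ∑ ω ∈ B, w ω := by
    rw [hs'def, Finset.sum_filter_of_ne
      (fun y _ h => lt_of_lt_of_le ((hqB0 y).lt_of_ne (Ne.symm h)) (hqBpy y)), hTqB]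
  have hsqC : ∑ y ∈ s', qC y = ∑ ω ∈ C, w ω := by
    rw [hs'def, Finset.sum_filter_of_ne
      (fun y _ h => lt_of_lt_of_le ((hqC0 y).lt_of_ne (Ne.symm h)) (hqCpy y)), hTqC]
  -- the scaled triples
  set u : α → ℝ := fun y => qA y / py y / (∑ ω ∈ A, w ω) * a with hudef
  set v : α → ℝ := fun y => qB y / py y / (∑ ω ∈ B, w ω) * b with hvdef
  set w' : α → ℝ := fun y => qC y / py y / (∑ ω ∈ C, w ω) * c with hw'def
  have hu0 : ∀ y ∈ s', 0 ≤ u y := fun y hy =>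
    mul_nonneg (div_nonneg (div_nonneg (hqA0 y) (hpy0 y)) hA.le) ha0
  have hv0 : ∀ y ∈ s', 0 ≤ v y := fun y hy =>
    mul_nonneg (div_nonneg (div_nonneg (hqB0 y) (hpy0 y)) hB.le) hb0
  have hw0 : ∀ y ∈ s', 0 ≤ w' y := fun y hy =>
    mul_nonneg (div_nonneg (div_nonneg (hqC0 y) (hpy0 y)) hC.le) hc0
  have hNR : ∀ y ∈ s', 4 < u y + v y + w' y + Real.sqrt (u y * v y * w' y) := by
    intro y hy
    by_contra hle
    push_neg at hle
    have hRep := rep_of_bound (hu0 y hy) (hv0 y hy) (hw0 y hy) hle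
    exact lt_irrefl _ (hcon y (hspos y hy) (u y) (v y) (w' y) hRep le_rfl le_rfl)
  have hau : ∑ y ∈ s', py y * u y = a := by
    have h1 : ∀ y ∈ s', py y * u y = qA y * (a / (∑ ω ∈ A, w ω)) := by
      intro y hy
      have h2 := (hspos y hy).ne'
      rw [hudef]
      field_simp
    rw [Finset.sum_congr rfl h1, ← Finset.sum_mul, hsqA]
    field_simp
  have hbv : ∑ y ∈ s', py y * v y = b := by
    have h1 : ∀ y ∈ s', py y * v y = qB y * (b / (∑ ω ∈ B, w ω)) := by
      intro y hy
      have h2 := (hspos y hy).ne'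
      rw [hvdef]
      field_simp
    rw [Finset.sum_congr rfl h1, ← Finset.sum_mul, hsqB]
    field_simp
  have hcw : ∑ y ∈ s', py y * w' y = c := by
    have h1 : ∀ y ∈ s', py y * w' y = qC y * (c / (∑ ω ∈ C, w ω)) := by
      intro y hy
      have h2 := (hspos y hy).ne'
      rw [hw'def]
      field_simp
    rw [Finset.sum_congr rfl h1, ← Finset.sum_mul, hsqC]
    field_simp
  exact incurved s' py u v w' hspos hsp hu0 hv0 hw0 hau hbv hcw hg hNR
end

section
/- For any $(a,b) \in \mathbb{R}_{\geq 0}^2$ with $a, b > 0$, $a \neq b$, and $a + b \leq 4$, the maximum over $x \in [a/2, 2 - b/2]$ of $c(x) := (2 - a/x)(2 - b/(2-x))$ equals $4 + \frac{1}{2}\big(ab - 2a - 2b - \sqrt{ab(4-a)(4-b)}\big)$, attained at $x = \frac{a(4-b) - \sqrt{ab(4-a)(4-b)}}{2(a-b)}$. -/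
set_option maxHeartbeats 1600000 in
theorem stmt_18 (a b : ℝ) (ha : 0 < a) (hb : 0 < b) (hne : a ≠ b) (hab : a + b ≤ 4) :
    (a * (4 - b) - Real.sqrt (a * b * (4 - a) * (4 - b))) / (2 * (a - b)) ∈
      Set.Icc (a / 2) (2 - b / 2) ∧
    (2 - a / ((a * (4 - b) - Real.sqrt (a * b * (4 - a) * (4 - b))) / (2 * (a - b)))) *
        (2 - b / (2 - (a * (4 - b) - Real.sqrt (a * b * (4 - a) * (4 - b))) / (2 * (a - b))))
      = 4 + 1 / 2 * (a * b - 2 * a - 2 * b - Real.sqrt (a * b * (4 - a) * (4 - b))) ∧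
    ∀ x ∈ Set.Icc (a / 2) (2 - b / 2),
      (2 - a / x) * (2 - b / (2 - x)) ≤
        4 + 1 / 2 * (a * b - 2 * a - 2 * b - Real.sqrt (a * b * (4 - a) * (4 - b))) := by
  have h4a : 0 < 4 - a := by linarith
  have h4b : 0 < 4 - b := by linarith
  set s := Real.sqrt (a * b * (4 - a) * (4 - b)) with hs_def
  have hs0 : 0 ≤ s := Real.sqrt_nonneg _
  have hs2 : s ^ 2 = a * b * (4 - a) * (4 - b) := Real.sq_sqrt (by positivity)
  clear_value s
  have hpos : 0 < 2 * a + 2 * b + s - a * b := by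
    nlinarith [sq_nonneg (a - b), mul_pos ha hb]
  set X := (a * (4 - b) - s) / (2 * (a - b)) with hX_def
  have hd' : (2 : ℝ) * (a - b) ≠ 0 := by
    intro h
    exact hne (by linarith [sub_eq_zero.mp (by linarith : a - b = 0)])
  have hXd : X * (2 * (a - b)) = a * (4 - b) - s := by
    rw [hX_def]; exact div_mul_cancel₀ _ hd'
  -- key quadratic identity
  have key : ∀ x : ℝ,
      2 * (2 * a + 2 * b + s - a * b) *
        ((4 + 1 / 2 * (a * b - 2 * a - 2 * b - s)) * (x * (2 - x))
          - (2 * x - a) * (2 * (2 - x) - b))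
      = ((2 * a + 2 * b + s - a * b) * x + (a * b - 4 * a - s)) ^ 2 := by
    intro x
    linear_combination -hs2
  have hX1 : a / 2 ≤ X ∧ X ≤ 2 - b / 2 := by
    rcases hne.lt_or_gt with hlt | hlt
    · -- a < b, denominator negative
      have hd : 2 * (a - b) < 0 := by linarith
      have hq1 : 0 ≤ a * (4 - a) * ((b - a) * (4 - a - b)) :=
        mul_nonneg (mul_pos ha h4a).le (mul_nonneg (by linarith) (by linarith))
      have hq2 : 0 ≤ b * (4 - b) * ((b - a) * (4 - a - b)) :=
        mul_nonneg (mul_pos hb h4b).le (mul_nonneg (by linarith) (by linarith))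
      have hsa : a * (4 - a) ≤ s := by
        have h1 : (a * (4 - a)) ^ 2 ≤ s ^ 2 := by rw [hs2]; nlinarith [hq1]
        nlinarith [hs0, mul_pos ha h4a]
      have hsb : s ≤ b * (4 - b) := by
        have h1 : s ^ 2 ≤ (b * (4 - b)) ^ 2 := by rw [hs2]; nlinarith [hq2]
        nlinarith [hs0, mul_pos hb h4b]
      constructor
      · rw [hX_def, le_div_iff_of_neg hd]; nlinarith
      · rw [hX_def, div_le_iff_of_neg hd]; nlinarith
    · -- b < a, denominator positive
      have hd : 0 < 2 * (a - b) := by linarith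
      have hq1 : 0 ≤ a * (4 - a) * ((a - b) * (4 - a - b)) :=
        mul_nonneg (mul_pos ha h4a).le (mul_nonneg (by linarith) (by linarith))
      have hq2 : 0 ≤ b * (4 - b) * ((a - b) * (4 - a - b)) :=
        mul_nonneg (mul_pos hb h4b).le (mul_nonneg (by linarith) (by linarith))
      have hsa : s ≤ a * (4 - a) := by
        have h1 : s ^ 2 ≤ (a * (4 - a)) ^ 2 := by rw [hs2]; nlinarith [hq1]
        nlinarith [hs0, mul_pos ha h4a]
      have hsb : b * (4 - b) ≤ s := by
        have h1 : (b * (4 - b)) ^ 2 ≤ s ^ 2 := by rw [hs2]; nlinarith [hq2]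
        nlinarith [hs0, mul_pos hb h4b]
      constructor
      · rw [hX_def, le_div_iff₀ hd]; nlinarith
      · rw [hX_def, div_le_iff₀ hd]; nlinarith
  obtain ⟨hXa, hXb⟩ := hX1
  clear_value X
  have hX0 : 0 < X := by linarith
  have h2X : 0 < 2 - X := by linarith
  have hXne : X ≠ 0 := ne_of_gt hX0
  have h2Xne : 2 - X ≠ 0 := ne_of_gt h2X
  have hlin : (2 * a + 2 * b + s - a * b) * X + (a * b - 4 * a - s) = 0 := by
    have h : ((2 * a + 2 * b + s - a * b) * X + (a * b - 4 * a - s)) * (2 * (a - b)) = 0 := by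
      linear_combination (2 * a + 2 * b + s - a * b) * hXd - hs2
    rcases mul_eq_zero.mp h with h | h
    · exact h
    · exact absurd h hd'
  refine ⟨⟨hXa, hXb⟩, ?_, ?_⟩
  · -- equality at X
    have h2 := key X
    rw [hlin] at h2
    have hf : (2 * X - a) * (2 * (2 - X) - b)
        = (4 + 1 / 2 * (a * b - 2 * a - 2 * b - s)) * (X * (2 - X)) := by
      have hK : 2 * (2 * a + 2 * b + s - a * b) ≠ 0 := ne_of_gt (by linarith)
      have h3 : 2 * (2 * a + 2 * b + s - a * b) *
          ((4 + 1 / 2 * (a * b - 2 * a - 2 * b - s)) * (X * (2 - X))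
            - (2 * X - a) * (2 * (2 - X) - b)) = 0 := by
        rw [h2]; ring
      rcases mul_eq_zero.mp h3 with h | h
      · exact absurd h hK
      · linarith
    have heq : (2 - a / X) * (2 - b / (2 - X))
        = ((2 * X - a) * (2 * (2 - X) - b)) / (X * (2 - X)) := by
      field_simp
    rw [heq, div_eq_iff (ne_of_gt (mul_pos hX0 h2X)), hf]
  · -- maximality
    intro x hx
    obtain ⟨hxa, hxb⟩ := hx
    have hx0 : 0 < x := by linarith
    have h2x : 0 < 2 - x := by linarith
    have h2 := key x
    have hsq := sq_nonneg ((2 * a + 2 * b + s - a * b) * x + (a * b - 4 * a - s))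
    have hf : (2 * x - a) * (2 * (2 - x) - b)
        ≤ (4 + 1 / 2 * (a * b - 2 * a - 2 * b - s)) * (x * (2 - x)) := by
      nlinarith [h2, hsq, hpos]
    have hxne : x ≠ 0 := ne_of_gt hx0
    have h2xne : 2 - x ≠ 0 := ne_of_gt h2x
    have heq : (2 - a / x) * (2 - b / (2 - x))
        = ((2 * x - a) * (2 * (2 - x) - b)) / (x * (2 - x)) := by
      field_simp
    rw [heq, div_le_iff₀ (mul_pos hx0 h2x)]
    linarith [hf]
end
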